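/- arXiv:1510.03912 — 10 statements merged into one kernel-verified Lean document; each statement's English description precedes it below -/
import Mathlib

section
/- For n ≥ 2k, the family P(n,k,1) of all vectors in V(n,k,1) whose last non-zero coordinate equals -1 is intersecting and has cardinality binom(n, k+1). -/
/-- `V n k l` : vectors in `{0,±1}^n` with exactly `k` coordinates `+1` and
exactly `l` coordinates `-1`. -/
def V (n k l : ℕ) : Set (Fin n → ℤ) :=
  {v | (∀ i, v i = 0 ∨ v i = 1 ∨ v i = -1) ∧
       (Finset.univ.filter fun i => v i = 1).card = k ∧
       (Finset.univ.filter fun i => v i = -1).card = l}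

/-- scalar product -/
def dot {n : ℕ} (v w : Fin n → ℤ) : ℤ := ∑ i, v i * w i

/-- `P n k` : vectors of `V n k 1` whose last non-zero coordinate equals `-1`. -/
def P (n k : ℕ) : Set (Fin n → ℤ) :=
  {v ∈ V n k 1 | ∃ j : Fin n, v j = -1 ∧ ∀ i : Fin n, j < i → v i = 0}

lemma neg_one_filter {n : ℕ} {v : Fin n → ℤ} {j : Fin n}
    (h : (Finset.univ.filter fun i => v i = -1).card = 1) (hj : v j = -1) :
    ∀ i, v i = -1 → i = j := by
  obtain ⟨a, ha⟩ := Finset.card_eq_one.mp h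
  intro i hi
  have h1 : i ∈ ({a} : Finset (Fin n)) :=
    ha ▸ (Finset.mem_filter.mpr ⟨Finset.mem_univ _, hi⟩)
  have h2 : j ∈ ({a} : Finset (Fin n)) :=
    ha ▸ (Finset.mem_filter.mpr ⟨Finset.mem_univ _, hj⟩)
  simp only [Finset.mem_singleton] at h1 h2
  rw [h1, h2]

lemma dot_ge {n : ℕ} {v w : Fin n → ℤ} {jv jw : Fin n}
    (hjv : v jv = -1) (hjv' : ∀ i, jv < i → v i = 0)
    (hv01 : ∀ i, i ≠ jv → v i = 0 ∨ v i = 1)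
    (hw0 : ∀ i, w i = 0 ∨ w i = 1 ∨ w i = -1)
    (hw01 : ∀ i, i ≠ jw → w i = 0 ∨ w i = 1)
    (hle : jv ≤ jw) : -1 ≤ dot v w := by
  have h1 : -1 ≤ v jv * w jv := by
    rcases hw0 jv with h | h | h <;> rw [hjv, h] <;> norm_num
  have h2 : 0 ≤ ∑ i ∈ Finset.univ.erase jv, v i * w i := by
    apply Finset.sum_nonneg
    intro i hi
    have hine : i ≠ jv := (Finset.mem_erase.mp hi).1
    rcases hv01 i hine with h | h
    · simp [h]
    · have hijw : i ≠ jw := by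
        rcases eq_or_lt_of_le hle with he | hlt
        · exact he ▸ hine
        · intro hij
          rw [hij, hjv' jw hlt] at h
          norm_num at h
      rcases hw01 i hijw with h' | h' <;> simp [h, h']
  have h3 : dot v w = v jv * w jv + ∑ i ∈ Finset.univ.erase jv, v i * w i :=
    (Finset.add_sum_erase _ _ (Finset.mem_univ jv)).symm
  linarith

theorem stmt_4 (n k : ℕ) (hk : 1 ≤ k) (hn : 2 * k ≤ n) :
    (∀ v ∈ P n k, ∀ w ∈ P n k, -2 < dot v w) ∧
    (P n k).ncard = n.choose (k + 1) := by
  constructor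
  · rintro v ⟨⟨hv0, hv1, hvm⟩, jv, hjv, hjv'⟩ w ⟨⟨hw0, hw1, hwm⟩, jw, hjw, hjw'⟩
    have hv01 : ∀ i, i ≠ jv → v i = 0 ∨ v i = 1 := by
      intro i hi
      rcases hv0 i with h | h | h
      · exact Or.inl h
      · exact Or.inr h
      · exact absurd (neg_one_filter hvm hjv i h) hi
    have hw01 : ∀ i, i ≠ jw → w i = 0 ∨ w i = 1 := by
      intro i hi
      rcases hw0 i with h | h | h
      · exact Or.inl h
      · exact Or.inr h
      · exact absurd (neg_one_filter hwm hjw i h) hi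
    have hcomm : dot v w = dot w v := by
      simp only [dot]
      exact Finset.sum_congr rfl fun i _ => mul_comm _ _
    rcases le_total jv jw with h | h
    · have := dot_ge hjv hjv' hv01 hw0 hw01 h
      linarith
    · have := dot_ge hjw hjw' hw01 hv0 hv01 h
      rw [hcomm]
      linarith
  · set g : (Fin n → ℤ) → Finset (Fin n) := fun v => Finset.univ.filter fun i => v i ≠ 0
      with hg
    have hsupp : ∀ v ∈ V n k 1, (Finset.univ.filter fun i => v i ≠ 0) =
        (Finset.univ.filter fun i => v i = 1) ∪ (Finset.univ.filter fun i => v i = -1) := by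
      rintro v ⟨hv0, _, _⟩
      ext i
      simp only [Finset.mem_filter, Finset.mem_union, Finset.mem_univ, true_and]
      rcases hv0 i with h | h | h <;> simp [h]
    have hinj : Set.InjOn g (P n k) := by
      rintro v ⟨⟨hv0, hv1, hvm⟩, jv, hjv, hjv'⟩ w ⟨⟨hw0, hw1, hwm⟩, jw, hjw, hjw'⟩ hvw
      have hmem : ∀ i, v i ≠ 0 ↔ w i ≠ 0 := by
        intro i
        have := Finset.ext_iff.mp hvw i
        simpa [hg] using this
      have hvneg : ∀ i, v i = -1 → i = jv := neg_one_filter hvm hjv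
      have hwneg : ∀ i, w i = -1 → i = jw := neg_one_filter hwm hjw
      have hjj : jv = jw := by
        have h1 : jw ≤ jv := by
          by_contra h
          push_neg at h
          exact ((hmem jw).mpr (by rw [hjw]; norm_num)) (hjv' jw h)
        have h2 : jv ≤ jw := by
          by_contra h
          push_neg at h
          exact ((hmem jv).mp (by rw [hjv]; norm_num)) (hjw' jv h)
        exact le_antisymm h2 h1
      funext i
      by_cases hij : i = jv
      · rw [hij, hjv, hjj, hjw]
      · have hv01 : v i = 0 ∨ v i = 1 := by
          rcases hv0 i with h | h | h
          · exact Or.inl h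
          · exact Or.inr h
          · exact absurd (hvneg i h) hij
        have hw01 : w i = 0 ∨ w i = 1 := by
          rcases hw0 i with h | h | h
          · exact Or.inl h
          · exact Or.inr h
          · exact absurd (hwneg i h) (hjj ▸ hij)
        rcases hv01 with h | h <;> rcases hw01 with h' | h'
        · rw [h, h']
        · exact absurd h (((hmem i).mpr (by rw [h']; norm_num)))
        · exact absurd h' (((hmem i).mp (by rw [h]; norm_num)))
        · rw [h, h']
    have himg : g '' P n k = {s : Finset (Fin n) | s.card = k + 1} := by
      apply Set.eq_of_subset_of_subset
      · rintro s ⟨v, hv, rfl⟩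
        obtain ⟨⟨hv0, hv1, hvm⟩, -⟩ := id hv
        have hs := hsupp v hv.1
        simp only [Set.mem_setOf_eq, hg]
        rw [hs, Finset.card_union_of_disjoint, hv1, hvm]
        rw [Finset.disjoint_left]
        intro a ha hb
        simp only [Finset.mem_filter] at ha hb
        rw [ha.2] at hb
        norm_num at hb
      · rintro s hs
        simp only [Set.mem_setOf_eq] at hs
        have hne : s.Nonempty := Finset.card_pos.mp (by omega)
        set j := s.max' hne with hjdef
        refine ⟨fun i => if i = j then -1 else if i ∈ s then 1 else 0,
          ⟨⟨?_, ?_, ?_⟩, j, ?_, ?_⟩, ?_⟩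
        · intro i
          by_cases h1 : i = j <;> by_cases h2 : i ∈ s <;> simp [h1, h2]
        · have he : (Finset.univ.filter fun i =>
              (if i = j then (-1:ℤ) else if i ∈ s then 1 else 0) = 1) = s.erase j := by
            ext i
            by_cases h1 : i = j <;> by_cases h2 : i ∈ s <;>
              simp [h1, h2, Finset.mem_erase]
          rw [he, Finset.card_erase_of_mem (s.max'_mem hne)]
          omega
        · have he : (Finset.univ.filter fun i =>
              (if i = j then (-1:ℤ) else if i ∈ s then 1 else 0) = -1) = {j} := by
            ext i
            by_cases h1 : i = j <;> by_cases h2 : i ∈ s <;> simp [h1, h2]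
          rw [he]
          simp
        · simp
        · intro i hi
          have h1 : i ≠ j := by
            intro h
            rw [h] at hi
            exact lt_irrefl _ hi
          have h2 : i ∉ s := fun hm => absurd (s.le_max' i hm) (not_le.mpr hi)
          simp [h1, h2]
        · ext i
          simp only [hg, Finset.mem_filter, Finset.mem_univ, true_and]
          by_cases h1 : i = j
          · subst h1
            simp [hjdef, s.max'_mem hne]
          · by_cases h2 : i ∈ s <;> simp [h1, h2]
    have h1 : (P n k).ncard = (g '' P n k).ncard := (Set.ncard_image_of_injOn hinj).symm
    rw [h1, himg]
    have h2 : {s : Finset (Fin n) | s.card = k + 1}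
        = ↑(Finset.univ.powersetCard (k + 1) : Finset (Finset (Fin n))) := by
      ext s
      simp [Finset.mem_powersetCard_univ]
    rw [h2, Set.ncard_coe_finset, Finset.card_powersetCard, Finset.card_univ, Fintype.card_fin]
end

section
/- If F is an intersecting subfamily of V(n,k,1) (no two vectors with scalar product -2), then the family P(F) ⊂ V(n+1,k,1), obtained by appending a 0 coordinate to each vector of F and adding all vectors of V(n+1,k,1) whose (n+1)-st coordinate is -1, is intersecting and has cardinality |F| + binom(n,k). -/
/-- the family `P(F) ⊆ V (n+1) k 1` obtained from `F ⊆ V n k 1` by appending a `0`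
coordinate to each member of `F` and adding all vectors of `V (n+1) k 1` whose last
coordinate is `-1`. -/
def PF (n k : ℕ) (F : Set (Fin n → ℤ)) : Set (Fin (n + 1) → ℤ) :=
  ((fun v : Fin n → ℤ => Fin.snoc v 0) '' F) ∪
    {w ∈ V (n + 1) k 1 | w (Fin.last n) = -1}

lemma filter_snoc_card {n : ℕ} (v : Fin n → ℤ) (x a : ℤ) :
    (Finset.univ.filter fun i => (Fin.snoc v x : Fin (n+1) → ℤ) i = a).card
      = (Finset.univ.filter fun i => v i = a).card + if x = a then 1 else 0 := by
  rw [Finset.card_filter, Finset.card_filter, Fin.sum_univ_castSucc]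
  simp [Fin.snoc_castSucc, Fin.snoc_last]

lemma dot_snoc {n : ℕ} (v w : Fin n → ℤ) (x y : ℤ) :
    dot (Fin.snoc v x) (Fin.snoc w y) = dot v w + x * y := by
  unfold dot
  rw [Fin.sum_univ_castSucc]
  simp [Fin.snoc_castSucc, Fin.snoc_last]

lemma dot_comm {n : ℕ} (v w : Fin n → ℤ) : dot v w = dot w v := by
  unfold dot; simp [mul_comm]

lemma dot_ge_neg_card {n : ℕ} (v w : Fin n → ℤ)
    (hv : ∀ i, v i = 0 ∨ v i = 1 ∨ v i = -1)
    (hw : ∀ i, w i = 0 ∨ w i = 1) :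
    -(((Finset.univ.filter fun i => v i = -1).card : ℤ)) ≤ dot v w := by
  have h : ∀ i ∈ (Finset.univ : Finset (Fin n)),
      (if v i = -1 then (-1 : ℤ) else 0) ≤ v i * w i := by
    intro i _
    rcases hw i with h1 | h1 <;> rcases hv i with h2 | h2 | h2 <;> simp [h1, h2]
  have := Finset.sum_le_sum h
  rw [Finset.sum_ite, Finset.sum_const, Finset.sum_const_zero] at this
  simpa [dot] using this

lemma dot_nonneg' {n : ℕ} (v w : Fin n → ℤ)
    (hv : ∀ i, v i = 0 ∨ v i = 1) (hw : ∀ i, w i = 0 ∨ w i = 1) :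
    0 ≤ dot v w := by
  apply Finset.sum_nonneg
  intro i _
  rcases hv i with h1 | h1 <;> rcases hw i with h2 | h2 <;> simp [h1, h2]

lemma V_finite (n k l : ℕ) : (V n k l).Finite := by
  apply Set.Finite.subset (Set.Finite.pi (fun i : Fin n => Set.finite_Icc (-1 : ℤ) 1))
  intro v hv
  rw [Set.mem_pi]
  intro i _
  rcases hv.1 i with h | h | h <;> simp [h]

theorem stmt_6 (n k : ℕ) (hk : 1 ≤ k) (hn : 2 * k ≤ n)
    (F : Set (Fin n → ℤ)) (hF : F ⊆ V n k 1)
    (hint : ∀ v ∈ F, ∀ w ∈ F, dot v w ≠ -2) :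
    PF n k F ⊆ V (n + 1) k 1 ∧
    (∀ v ∈ PF n k F, ∀ w ∈ PF n k F, dot v w ≠ -2) ∧
    (PF n k F).ncard = F.ncard + n.choose k := by
  set T : Set (Fin (n + 1) → ℤ) := {w ∈ V (n + 1) k 1 | w (Fin.last n) = -1} with hTdef
  have hPF : PF n k F = ((fun v : Fin n → ℤ => Fin.snoc v 0) '' F) ∪ T := rfl
  -- facts about members of T
  have hTfact : ∀ w ∈ T, (∀ i, Fin.init w i = 0 ∨ Fin.init w i = 1) ∧
      (Finset.univ.filter fun i => Fin.init w i = 1).card = k ∧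
      w = Fin.snoc (Fin.init w) (-1) := by
    rintro w ⟨⟨h0, h1, h2⟩, hl⟩
    have hwe : w = Fin.snoc (Fin.init w) (-1) := by
      rw [← hl]; exact (Fin.snoc_init_self w).symm
    rw [hwe, filter_snoc_card] at h1 h2
    norm_num at h1 h2
    have hno : ∀ i, Fin.init w i ≠ -1 := by
      intro i hi
      have hmem : i ∈ Finset.univ.filter (fun i => Fin.init w i = -1) := by simp [hi]
      exact h2 hi
    refine ⟨?_, h1, hwe⟩
    intro i
    have := h0 i.castSucc
    have hini : Fin.init w i = w i.castSucc := rfl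
    rcases this with h | h | h
    · left; rw [hini, h]
    · right; rw [hini, h]
    · exact absurd (by rw [hini, h]) (hno i)
  -- part 1
  have hsub : PF n k F ⊆ V (n + 1) k 1 := by
    rw [hPF]
    rintro w (⟨v, hv, rfl⟩ | hw)
    · obtain ⟨h0, h1, h2⟩ := hF hv
      refine ⟨?_, ?_, ?_⟩
      · intro i
        refine Fin.lastCases ?_ ?_ i
        · left; simp [Fin.snoc_last]
        · intro j; simpa [Fin.snoc_castSucc] using h0 j
      · rw [filter_snoc_card]; simp [h1]
      · rw [filter_snoc_card]; simp [h2]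
    · exact hw.1
  -- part 2
  have hdotT : ∀ v ∈ F, ∀ w ∈ T, dot (Fin.snoc v 0) w ≠ -2 := by
    intro v hv w hw
    obtain ⟨hw0, hw1, hwe⟩ := hTfact w hw
    obtain ⟨h0, h1, h2⟩ := hF hv
    rw [hwe, dot_snoc]
    have hge := dot_ge_neg_card v (Fin.init w) h0 hw0
    rw [h2] at hge
    have : (-1 : ℤ) ≤ dot v (Fin.init w) := by exact_mod_cast hge
    intro hcon
    rw [zero_mul, add_zero] at hcon
    linarith
  have hdotTT : ∀ v ∈ T, ∀ w ∈ T, dot v w ≠ -2 := by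
    intro v hv w hw
    obtain ⟨hv0, _, hve⟩ := hTfact v hv
    obtain ⟨hw0, _, hwe⟩ := hTfact w hw
    rw [hve, hwe, dot_snoc]
    have := dot_nonneg' _ _ hv0 hw0
    intro hcon
    have h1 : (-1 : ℤ) * (-1) = 1 := by norm_num
    rw [h1] at hcon
    linarith
  have hint' : ∀ v ∈ PF n k F, ∀ w ∈ PF n k F, dot v w ≠ -2 := by
    rw [hPF]
    rintro v (⟨a, ha, rfl⟩ | hv) w (⟨b, hb, rfl⟩ | hw)
    · rw [dot_snoc]
      have := hint a ha b hb
      simpa using this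
    · exact hdotT a ha w hw
    · rw [dot_comm]; exact hdotT b hb v hv
    · exact hdotTT v hv w hw
  -- part 3
  have hFfin : F.Finite := (V_finite n k 1).subset hF
  have hTfin : T.Finite := (V_finite (n + 1) k 1).subset (fun w hw => hw.1)
  have hinj : Function.Injective
      (fun v : Fin n → ℤ => (Fin.snoc v 0 : Fin (n + 1) → ℤ)) := by
    intro a b h
    funext i
    have := congrFun h i.castSucc
    simpa [Fin.snoc_castSucc] using this
  have hdisj : Disjoint ((fun v : Fin n → ℤ => Fin.snoc v 0) '' F) T := by
    rw [Set.disjoint_left]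
    rintro x ⟨v, hv, rfl⟩ hx
    have := hx.2
    simp [Fin.snoc_last] at this
  have hinj2 : Function.Injective (fun s : Finset (Fin n) =>
      (Fin.snoc (fun i => if i ∈ s then (1 : ℤ) else 0) (-1) : Fin (n + 1) → ℤ)) := by
    intro s t h
    ext i
    have := congrFun h i.castSucc
    simp only [Fin.snoc_castSucc] at this
    by_cases hs : i ∈ s <;> by_cases ht : i ∈ t <;> simp [hs, ht] at this ⊢
  have hTcard : T.ncard = n.choose k := by
    have hTeq : T = (fun s : Finset (Fin n) =>
        (Fin.snoc (fun i => if i ∈ s then (1 : ℤ) else 0) (-1) : Fin (n + 1) → ℤ)) ''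
        ((Finset.univ.powersetCard k : Finset (Finset (Fin n))) : Set (Finset (Fin n))) := by
      ext w
      constructor
      · intro hw
        obtain ⟨hw0, hw1, hwe⟩ := hTfact w hw
        refine ⟨Finset.univ.filter (fun i => Fin.init w i = 1), ?_, ?_⟩
        · simpa [Finset.mem_powersetCard_univ] using hw1
        · show Fin.snoc (fun i => if i ∈ Finset.univ.filter (fun j => Fin.init w j = 1)
              then (1 : ℤ) else 0) (-1) = w
          have hχ : (fun i : Fin n => if i ∈ Finset.univ.filter
              (fun j => Fin.init w j = 1) then (1 : ℤ) else 0) = Fin.init w := by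
            funext i
            rcases hw0 i with h | h <;> simp [h]
          rw [hχ]
          exact hwe.symm
      · rintro ⟨s, hs, rfl⟩
        have hcardS : s.card = k :=
          Finset.mem_powersetCard_univ.mp (Finset.mem_coe.mp hs)
        beta_reduce
        refine ⟨⟨?_, ?_, ?_⟩, ?_⟩
        · intro i
          refine Fin.lastCases ?_ ?_ i
          · right; right; simp [Fin.snoc_last]
          · intro j
            simp only [Fin.snoc_castSucc]
            by_cases h : j ∈ s <;> simp [h]
        · rw [filter_snoc_card]
          have h1 : (Finset.univ.filter fun i => (if i ∈ s then (1 : ℤ) else 0) = 1) = s := by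
            ext i; by_cases h : i ∈ s <;> simp [h]
          rw [if_neg (by norm_num : (-1 : ℤ) ≠ 1), add_zero, h1, hcardS]
        · rw [filter_snoc_card]
          have h1 : (Finset.univ.filter fun i => (if i ∈ s then (1 : ℤ) else 0) = -1) = ∅ := by
            ext i; by_cases h : i ∈ s <;> simp [h]
          rw [if_pos rfl, h1]
          simp
        · simp [Fin.snoc_last]
    rw [hTeq, Set.ncard_image_of_injective _ hinj2, Set.ncard_coe_finset,
      Finset.card_powersetCard, Finset.card_univ, Fintype.card_fin]
  refine ⟨hsub, hint', ?_⟩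
  rw [hPF, Set.ncard_union_eq hdisj (hFfin.image _) hTfin,
    Set.ncard_image_of_injective _ hinj, hTcard]
end

section
/- Fix a cyclic permutation π of [n] and let U(π,k) be the n intervals of length k along π. For any nonempty family F ⊂ U(π,k) and any 1 ≤ l < k, the number of (k-l)-element intervals of π contained in some member of F is at least min{|F| + l, n}. -/
open Finset Pointwise

/-- the family of the `n` cyclic intervals of length `m` along the cyclic
arrangement of `[n]` given by the bijection `π : ZMod n ≃ Fin n`. -/
def cycInt (n : ℕ) (π : ZMod n ≃ Fin n) (m : ℕ) : Set (Finset (Fin n)) :=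
  {S | ∃ t : ZMod n, S = (Finset.range m).image fun s : ℕ => π (t + (s : ZMod n))}

section aux

variable {n : ℕ} [NeZero n]

lemma cyc_closure_univ {B : Finset (ZMod n)} (hB : B.Nonempty)
    (h : ∀ b ∈ B, b + 1 ∈ B) : B = Finset.univ := by
  obtain ⟨b, hb⟩ := hB
  have key : ∀ m : ℕ, b + (m : ZMod n) ∈ B := by
    intro m
    induction m with
    | zero => simpa using hb
    | succ m ih =>
      have h2 := h _ ih
      push_cast
      rw [← add_assoc]
      exact h2
  ext x
  simp only [Finset.mem_univ, iff_true]
  have hx : x = b + ((x - b).val : ZMod n) := by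
    rw [ZMod.natCast_val, ZMod.cast_id]; ring
  rw [hx]; exact key _

lemma step_lemma {B : Finset (ZMod n)} (hB : B.Nonempty) :
    min (B.card + 1) n ≤ (B ∪ B.image (· + 1)).card := by
  by_cases h : ∀ b ∈ B, b + 1 ∈ B
  · have huniv := cyc_closure_univ hB h
    calc min (B.card + 1) n ≤ n := min_le_right _ _
    _ = B.card := by rw [huniv, Finset.card_univ, ZMod.card]
    _ ≤ _ := Finset.card_le_card Finset.subset_union_left
  · push_neg at h
    obtain ⟨b, hb, hb1⟩ := h
    have hsub : insert (b + 1) B ⊆ B ∪ B.image (· + 1) := by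
      intro x hx
      rcases Finset.mem_insert.mp hx with rfl | hx
      · exact Finset.mem_union_right _ (Finset.mem_image.mpr ⟨b, hb, rfl⟩)
      · exact Finset.mem_union_left _ hx
    calc min (B.card + 1) n ≤ B.card + 1 := min_le_left _ _
    _ = (insert (b + 1) B).card := (Finset.card_insert_of_notMem hb1).symm
    _ ≤ _ := Finset.card_le_card hsub

lemma sumset_lb {A : Finset (ZMod n)} (hA : A.Nonempty) (l : ℕ) :
    min (A.card + l) n ≤ (A + (Finset.range (l + 1)).image (Nat.cast : ℕ → ZMod n)).card := by
  induction l with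
  | zero =>
    have hsub : A ⊆ A + (Finset.range 1).image (Nat.cast : ℕ → ZMod n) := by
      intro a ha
      exact Finset.mem_add.mpr ⟨a, ha, 0, by simp, by simp⟩
    calc min (A.card + 0) n ≤ A.card := by simp
    _ ≤ _ := Finset.card_le_card hsub
  | succ l ih =>
    set D := A + (Finset.range (l + 1)).image (Nat.cast : ℕ → ZMod n) with hD
    have hDne : D.Nonempty := by
      obtain ⟨a, ha⟩ := hA
      exact ⟨a + 0, Finset.mem_add.mpr ⟨a, ha, 0, Finset.mem_image.mpr ⟨0, by simp, by simp⟩, rfl⟩⟩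
    have hsub : D ∪ D.image (· + 1) ⊆
        A + (Finset.range (l + 1 + 1)).image (Nat.cast : ℕ → ZMod n) := by
      intro x hx
      rcases Finset.mem_union.mp hx with hx | hx
      · obtain ⟨a, ha, c, hc, rfl⟩ := Finset.mem_add.mp hx
        obtain ⟨s, hs, rfl⟩ := Finset.mem_image.mp hc
        refine Finset.mem_add.mpr ⟨a, ha, s, Finset.mem_image.mpr ⟨s, ?_, rfl⟩, rfl⟩
        simp only [Finset.mem_range] at hs ⊢; omega
      · obtain ⟨y, hy, rfl⟩ := Finset.mem_image.mp hx
        obtain ⟨a, ha, c, hc, rfl⟩ := Finset.mem_add.mp hy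
        obtain ⟨s, hs, rfl⟩ := Finset.mem_image.mp hc
        refine Finset.mem_add.mpr ⟨a, ha, ((s + 1 : ℕ) : ZMod n),
          Finset.mem_image.mpr ⟨s + 1, ?_, rfl⟩, by push_cast; ring⟩
        simp only [Finset.mem_range] at hs ⊢; omega
    have h2 := step_lemma hDne
    have h3 := Finset.card_le_card hsub
    omega

variable (π : ZMod n ≃ Fin n)

/-- the cyclic interval of length `m` starting at `t`, as a Finset. -/
def cInt (m : ℕ) (t : ZMod n) : Finset (Fin n) :=
  (Finset.range m).image fun s : ℕ => π (t + (s : ZMod n))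

lemma mem_cInt {m : ℕ} (hm : m ≤ n) {t a : ZMod n} :
    π a ∈ cInt π m t ↔ (a - t).val < m := by
  constructor
  · intro h
    obtain ⟨s, hs, he⟩ := Finset.mem_image.mp h
    have ha : a = t + (s : ZMod n) := π.injective he.symm
    rw [ha, add_sub_cancel_left,
      ZMod.val_cast_of_lt (lt_of_lt_of_le (Finset.mem_range.mp hs) hm)]
    exact Finset.mem_range.mp hs
  · intro h
    refine Finset.mem_image.mpr ⟨(a - t).val, Finset.mem_range.mpr h, ?_⟩
    congr 1
    rw [ZMod.natCast_val, ZMod.cast_id]; ring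

lemma cInt_inj {m : ℕ} (hm1 : 1 ≤ m) (hmn : m < n) :
    Function.Injective (cInt π m) := by
  intro t u h
  by_contra hne
  have hmem : ∀ a : ZMod n, (a - t).val < m ↔ (a - u).val < m := by
    intro a
    rw [← mem_cInt π hmn.le, ← mem_cInt π hmn.le, h]
  have ht : (t - u).val < m := (hmem t).mp (by simp; omega)
  have hi0 : (t - u).val ≠ 0 := by
    intro h0
    exact hne (sub_eq_zero.mp ((ZMod.val_eq_zero _).mp h0))
  have hi1 : 1 ≤ (t - u).val := Nat.one_le_iff_ne_zero.mpr hi0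
  have hcast : (((t - u).val : ℕ) : ZMod n) = t - u := by
    rw [ZMod.natCast_val, ZMod.cast_id]
  have hkey : (t - 1) - u = (((t - u).val - 1 : ℕ) : ZMod n) := by
    rw [Nat.cast_sub hi1, hcast]
    push_cast
    ring
  have hval : ((t - 1) - u).val = (t - u).val - 1 := by
    rw [hkey, ZMod.val_cast_of_lt (by have := ZMod.val_lt (t - u); omega)]
  have h1 : ((t - 1) - u).val < m := by omega
  have h2 : ((t - 1) - t).val < m := (hmem (t - 1)).mpr h1
  have h3 : (t - 1) - t = ((n - 1 : ℕ) : ZMod n) := by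
    have hn1 : 1 ≤ n := Nat.one_le_iff_ne_zero.mpr (NeZero.ne n)
    rw [Nat.cast_sub hn1, ZMod.natCast_self]
    ring
  rw [h3, ZMod.val_cast_of_lt (by have := NeZero.ne n; omega)] at h2
  omega

end aux

theorem stmt_8 (n k l : ℕ) (hn : 0 < n) (hk : k ≤ n) (hl : 1 ≤ l) (hlk : l < k)
    (π : ZMod n ≃ Fin n)
    (F : Set (Finset (Fin n))) (hF : F ⊆ cycInt n π k) (hne : F.Nonempty) :
    min (F.ncard + l) n ≤
      {S | S ∈ cycInt n π (k - l) ∧ ∃ T ∈ F, S ⊆ T}.ncard := by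
  classical
  haveI : NeZero n := ⟨hn.ne'⟩
  set m := k - l with hmdef
  have hm1 : 1 ≤ m := by omega
  have hmn : m < n := by omega
  set T : Finset (ZMod n) := Finset.univ.filter (fun t => cInt π k t ∈ F) with hT
  have hTne : T.Nonempty := by
    obtain ⟨S, hS⟩ := hne
    obtain ⟨t, ht⟩ := hF hS
    refine ⟨t, Finset.mem_filter.mpr ⟨Finset.mem_univ _, ?_⟩⟩
    rw [cInt, ← ht]; exact hS
  have hFT : F ⊆ (fun t => cInt π k t) '' (T : Set (ZMod n)) := by
    intro S hS
    obtain ⟨t, ht⟩ := hF hS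
    refine ⟨t, Finset.mem_coe.mpr (Finset.mem_filter.mpr ⟨Finset.mem_univ _, ?_⟩), ht.symm⟩
    rw [cInt, ← ht]; exact hS
  have hFcard : F.ncard ≤ T.card := by
    calc F.ncard ≤ ((fun t => cInt π k t) '' (T : Set (ZMod n))).ncard :=
      Set.ncard_le_ncard hFT ((T : Set (ZMod n)).toFinite.image _)
    _ ≤ (T : Set (ZMod n)).ncard := Set.ncard_image_le (T : Set (ZMod n)).toFinite
    _ = T.card := Set.ncard_coe_finset T
  set D : Finset (ZMod n) := T + (Finset.range (l + 1)).image (Nat.cast : ℕ → ZMod n)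
    with hDdef
  have hsub : (cInt π m) '' (D : Set (ZMod n)) ⊆
      {S | S ∈ cycInt n π m ∧ ∃ T ∈ F, S ⊆ T} := by
    rintro _ ⟨u, hu, rfl⟩
    obtain ⟨t, ht, c, hc, rfl⟩ := Finset.mem_add.mp (Finset.mem_coe.mp hu)
    obtain ⟨j, hj, rfl⟩ := Finset.mem_image.mp hc
    have hj' : j ≤ l := by
      have := Finset.mem_range.mp hj; omega
    refine ⟨⟨t + (j : ZMod n), rfl⟩, cInt π k t, (Finset.mem_filter.mp ht).2, ?_⟩
    intro y hy
    obtain ⟨s, hs, rfl⟩ := Finset.mem_image.mp hy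
    have hs' : s < m := Finset.mem_range.mp hs
    refine Finset.mem_image.mpr ⟨j + s, Finset.mem_range.mpr (by omega), ?_⟩
    congr 1
    push_cast
    ring
  have hDcard : min (T.card + l) n ≤ D.card := sumset_lb hTne l
  have hinj := cInt_inj π hm1 hmn
  have h1 : ((cInt π m) '' (D : Set (ZMod n))).ncard = D.card := by
    rw [Set.ncard_image_of_injective _ hinj, Set.ncard_coe_finset]
  have hShfin : {S | S ∈ cycInt n π m ∧ ∃ T ∈ F, S ⊆ T}.Finite := by
    apply Set.Finite.subset (Set.finite_range (fun t => cInt π m t))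
    rintro S ⟨⟨t, ht⟩, -⟩
    exact ⟨t, ht.symm⟩
  have h2 : ((cInt π m) '' (D : Set (ZMod n))).ncard ≤
      {S | S ∈ cycInt n π m ∧ ∃ T ∈ F, S ⊆ T}.ncard :=
    Set.ncard_le_ncard hsub hShfin
  omega
end

section
/- Let G be a finite vertex-transitive graph and H an induced subgraph of G. Then α(G) ≤ (α(H)/|V(H)|) * |V(G)|, where α denotes the independence number. -/
/-- a finset of vertices is independent in `G` -/
def IsIndep {V : Type*} (G : SimpleGraph V) (I : Finset V) : Prop :=
  ∀ u ∈ I, ∀ v ∈ I, ¬ G.Adj u v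

theorem stmt_9 {V : Type*} [Fintype V] [DecidableEq V] (G : SimpleGraph V)
    (htrans : ∀ u v : V, ∃ φ : G ≃g G, φ u = v)
    (s : Finset V) (hs : s.Nonempty)
    (αG αH : ℕ)
    (hαG : IsGreatest {m | ∃ I : Finset V, IsIndep G I ∧ I.card = m} αG)
    (hαH : IsGreatest {m | ∃ I : Finset V, I ⊆ s ∧ IsIndep G I ∧ I.card = m} αH) :
    αG * s.card ≤ αH * Fintype.card V := by
  classical
  obtain ⟨⟨I, hI, hIcard⟩, hGub⟩ := hαG
  obtain ⟨-, hHub⟩ := hαH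
  set A : Finset (V ≃ V) :=
    Finset.univ.filter (fun e => ∀ u v : V, G.Adj (e u) (e v) ↔ G.Adj u v) with hAdef
  have memA : ∀ e : V ≃ V, e ∈ A ↔ ∀ u v : V, G.Adj (e u) (e v) ↔ G.Adj u v := by
    intro e; simp [hAdef]
  have htrans' : ∀ u x : V, ∃ e ∈ A, e u = x := by
    intro u x
    obtain ⟨φ, hφ⟩ := htrans u x
    exact ⟨φ.toEquiv, (memA _).2 (fun a b => φ.map_adj_iff), hφ⟩
  have hcomp : ∀ e ∈ A, ∀ f ∈ A, e.trans f ∈ A := by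
    intro e he f hf
    rw [memA] at *
    intro u v
    simp only [Equiv.trans_apply]
    rw [hf, he]
  have hsymm : ∀ e ∈ A, e.symm ∈ A := by
    intro e he
    rw [memA] at *
    intro u v
    rw [← he (e.symm u) (e.symm v)]
    simp
  -- fibers
  set F : V → V → Finset (V ≃ V) := fun u x => A.filter (fun e => e u = x) with hFdef
  have hfib_eq : ∀ u x y : V, (F u x).card = (F u y).card := by
    intro u x y
    obtain ⟨g, hgA, hgxy⟩ := htrans' x y
    apply Finset.card_bij (fun e _ => e.trans g)
    · intro e he
      simp only [hFdef, Finset.mem_filter] at he ⊢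
      exact ⟨hcomp e he.1 g hgA, by simp [he.2, hgxy]⟩
    · intro e₁ h₁ e₂ h₂ h
      have : ∀ v, e₁ v = e₂ v := by
        intro v
        have := congrArg (fun t : V ≃ V => g.symm (t v)) h
        simpa using this
      exact Equiv.ext this
    · intro f hf
      simp only [hFdef, Finset.mem_filter] at hf
      refine ⟨f.trans g.symm, ?_, ?_⟩
      · simp only [hFdef, Finset.mem_filter]
        refine ⟨hcomp f hf.1 g.symm (hsymm g hgA), ?_⟩
        simp [hf.2, ← hgxy]
      · exact Equiv.ext (by simp)
  have hVpos : 0 < Fintype.card V := by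
    obtain ⟨v, hv⟩ := hs
    exact Fintype.card_pos_iff.2 ⟨v⟩
  obtain ⟨v₀, hv₀⟩ := hs
  set c : ℕ := (F v₀ v₀).card with hcdef
  have hcpos : 0 < c := by
    obtain ⟨e, heA, heq⟩ := htrans' v₀ v₀
    exact Finset.card_pos.2 ⟨e, by simp [hcdef, hFdef, Finset.mem_filter, heA, heq]⟩
  -- partition: for any u, sum over x of fibers = A.card, and each fiber has card c
  have hfib_c : ∀ u x : V, (F u x).card = c := by
    intro u x
    have h1 : ∑ y : V, (F u y).card = A.card := by
      rw [hFdef]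
      exact (Finset.card_eq_sum_card_fiberwise (fun e _ => Finset.mem_univ (e u))).symm
    have h2 : ∑ y : V, (F v₀ y).card = A.card := by
      rw [hFdef]
      exact (Finset.card_eq_sum_card_fiberwise (fun e _ => Finset.mem_univ (e v₀))).symm
    have h1' : ∑ y : V, (F u y).card = Fintype.card V * (F u x).card := by
      rw [Finset.sum_congr rfl (fun y _ => hfib_eq u y x)]
      simp [Finset.sum_const, Finset.card_univ]
    have h2' : ∑ y : V, (F v₀ y).card = Fintype.card V * c := by
      rw [Finset.sum_congr rfl (fun y _ => hfib_eq v₀ y v₀)]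
      simp [Finset.sum_const, Finset.card_univ, hcdef]
    have : Fintype.card V * (F u x).card = Fintype.card V * c := by
      rw [← h1', ← h2', h1, h2]
    exact Nat.eq_of_mul_eq_mul_left hVpos this
  have hAcard : A.card = Fintype.card V * c := by
    have h2 : ∑ y : V, (F v₀ y).card = A.card := by
      rw [hFdef]
      exact (Finset.card_eq_sum_card_fiberwise (fun e _ => Finset.mem_univ (e v₀))).symm
    rw [← h2, Finset.sum_congr rfl (fun y _ => hfib_c v₀ y)]
    simp [Finset.sum_const, Finset.card_univ]
  -- main double count
  have key1 : ∀ e ∈ A, ((I.image e) ∩ s).card ≤ αH := by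
    intro e he
    apply hHub
    refine ⟨(I.image e) ∩ s, Finset.inter_subset_right, ?_, rfl⟩
    intro u hu v hv
    rw [Finset.mem_inter] at hu hv
    obtain ⟨a, ha, rfl⟩ := Finset.mem_image.1 hu.1
    obtain ⟨b, hb, rfl⟩ := Finset.mem_image.1 hv.1
    rw [(memA e).1 he]
    exact hI a ha b hb
  have hinter : ∀ e : V ≃ V, ((I.image e) ∩ s).card
      = (I.filter (fun u => e u ∈ s)).card := by
    intro e
    rw [← Finset.card_image_of_injective (I.filter (fun u => e u ∈ s)) e.injective]
    congr 1
    ext x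
    simp only [Finset.mem_inter, Finset.mem_image, Finset.mem_filter]
    constructor
    · rintro ⟨⟨a, ha, rfl⟩, hxs⟩; exact ⟨a, ⟨ha, hxs⟩, rfl⟩
    · rintro ⟨a, ⟨ha, has⟩, rfl⟩; exact ⟨⟨a, ha, rfl⟩, has⟩
  have T_eq : ∑ e ∈ A, ((I.image e) ∩ s).card = αG * s.card * c := by
    calc ∑ e ∈ A, ((I.image e) ∩ s).card
        = ∑ e ∈ A, ∑ u ∈ I, (if e u ∈ s then 1 else 0) := by
          refine Finset.sum_congr rfl (fun e _ => ?_)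
          rw [hinter e, Finset.card_filter]
      _ = ∑ u ∈ I, ∑ e ∈ A, (if e u ∈ s then 1 else 0) := Finset.sum_comm
      _ = ∑ u ∈ I, (A.filter (fun e => e u ∈ s)).card := by
          refine Finset.sum_congr rfl (fun u _ => ?_)
          rw [Finset.card_filter]
      _ = ∑ u ∈ I, s.card * c := by
          refine Finset.sum_congr rfl (fun u _ => ?_)
          have : A.filter (fun e => e u ∈ s) = s.biUnion (fun x => F u x) := by
            ext e
            simp only [Finset.mem_filter, Finset.mem_biUnion, hFdef]
            constructor
            · rintro ⟨he, hes⟩; exact ⟨e u, hes, he, rfl⟩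
            · rintro ⟨x, hx, he, rfl⟩; exact ⟨he, hx⟩
          rw [this, Finset.card_biUnion]
          · rw [Finset.sum_congr rfl (fun x _ => hfib_c u x), Finset.sum_const,
              smul_eq_mul]
          · intro x hx y hy hxy
            simp only [Finset.disjoint_left, hFdef, Finset.mem_filter]
            rintro e ⟨-, rfl⟩ ⟨-, h⟩
            exact hxy h
      _ = αG * s.card * c := by
          rw [Finset.sum_const, hIcard]; ring
  have T_le : ∑ e ∈ A, ((I.image e) ∩ s).card ≤ αH * Fintype.card V * c := by
    calc ∑ e ∈ A, ((I.image e) ∩ s).card ≤ ∑ _e ∈ A, αH :=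
          Finset.sum_le_sum key1
      _ = A.card * αH := by rw [Finset.sum_const, smul_eq_mul]
      _ = αH * Fintype.card V * c := by rw [hAcard]; ring
  have := T_eq ▸ T_le
  exact Nat.le_of_mul_le_mul_right this hcpos
end

section
/- Let n ≥ 2k and c ≥ 1. Suppose A ⊂ ([n] choose k) and B ⊂ A are families such that every B ∈ B intersects every A ∈ A. Then |A| + c|B| ≤ max{ binom(n,k), (c+1)*binom(n-1,k-1) }. -/
set_option maxHeartbeats 1000000

open Finset

namespace Stmt10Aux

def interval (n k : ℕ) (i : ZMod n) : Finset (ZMod n) :=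
  (Finset.range k).image (fun j : ℕ => i + (j : ZMod n))

lemma natCast_inj_zmod {n a b : ℕ} [NeZero n] (ha : a < n) (hb : b < n)
    (h : (a : ZMod n) = b) : a = b := by
  have := congrArg ZMod.val h
  rwa [ZMod.val_natCast_of_lt ha, ZMod.val_natCast_of_lt hb] at this

lemma interval_card {n k : ℕ} [NeZero n] (hkn : k ≤ n) (i : ZMod n) :
    (interval n k i).card = k := by
  rw [interval, Finset.card_image_of_injOn, Finset.card_range]
  intro a ha b hb hab
  simp only [Finset.coe_range, Set.mem_Iio] at ha hb
  exact natCast_inj_zmod (lt_of_lt_of_le ha hkn) (lt_of_lt_of_le hb hkn) (add_left_cancel hab)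

lemma mem_interval {n k : ℕ} {i x : ZMod n} :
    x ∈ interval n k i ↔ ∃ p < k, x = i + (p : ZMod n) := by
  constructor
  · intro hx
    obtain ⟨j, hj, rfl⟩ := Finset.mem_image.mp hx
    exact ⟨j, Finset.mem_range.mp hj, rfl⟩
  · rintro ⟨p, hp, rfl⟩
    exact Finset.mem_image.mpr ⟨p, Finset.mem_range.mpr hp, rfl⟩

lemma cyclic {n k : ℕ} [NeZero n] (hk : 1 ≤ k) (hn : 2 * k ≤ n)
    (𝒜 ℬ : Finset (ZMod n)) (hBA : ℬ ⊆ 𝒜)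
    (hx : ∀ i ∈ ℬ, ∀ j ∈ 𝒜, ∃ p < k, ∃ q < k, i + (p : ZMod n) = j + (q : ZMod n))
    (s₀ : ZMod n) (hs₀ : s₀ ∈ ℬ) :
    𝒜.card + ℬ.card ≤ 2 * k ∧ ℬ.card ≤ k := by
  classical
  have excl : ∀ i ∈ ℬ, ∀ j ∈ 𝒜, j ≠ i + (k : ZMod n) ∧ j ≠ i - (k : ZMod n) := by
    intro i hi j hj
    obtain ⟨p, hp, q, hq, hpq⟩ := hx i hi j hj
    constructor
    · rintro rfl
      have h1 : (p : ZMod n) = ((k + q : ℕ) : ZMod n) := by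
        push_cast
        linear_combination hpq
      have h2 : p = k + q := natCast_inj_zmod (by omega) (by omega) h1
      omega
    · rintro rfl
      have h1 : ((p + k : ℕ) : ZMod n) = ((q : ℕ) : ZMod n) := by
        push_cast
        linear_combination hpq
      have h2 : p + k = q := natCast_inj_zmod (by omega) (by omega) h1
      omega
  set cls : ZMod n → ℕ := fun x =>
    if (x - s₀).val < k then (x - s₀).val else (x - s₀).val + k - n with hcls
  have rep : ∀ x ∈ 𝒜, cls x < k ∧
      (x = s₀ + (cls x : ZMod n) ∨ x = s₀ + (cls x : ZMod n) - (k : ZMod n)) := by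
    intro x hxA
    obtain ⟨p, hp, q, hq, hpq⟩ := hx s₀ hs₀ x hxA
    by_cases hle : q ≤ p
    · have hvx : x - s₀ = ((p - q : ℕ) : ZMod n) := by
        rw [Nat.cast_sub hle]
        linear_combination -hpq
      have hval : (x - s₀).val = p - q := by
        rw [hvx, ZMod.val_natCast_of_lt (by omega)]
      have hclsx : cls x = p - q := by
        rw [hcls]; simp only [hval]; rw [if_pos (by omega)]
      refine ⟨by omega, Or.inl ?_⟩
      rw [hclsx, ← hvx]
      ring
    · have hvx : x - s₀ = ((n - (q - p) : ℕ) : ZMod n) := by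
        rw [Nat.cast_sub (show q - p ≤ n by omega), Nat.cast_sub (show p ≤ q by omega)]
        rw [ZMod.natCast_self]
        linear_combination -hpq
      have hval : (x - s₀).val = n - (q - p) := by
        rw [hvx, ZMod.val_natCast_of_lt (by omega)]
      have hclsx : cls x = k - (q - p) := by
        rw [hcls]; simp only [hval]; rw [if_neg (by omega)]; omega
      refine ⟨by omega, Or.inr ?_⟩
      rw [hclsx]
      have h5 : ((k - (q - p) : ℕ) : ZMod n) = (k : ZMod n) - ((q - p : ℕ) : ZMod n) :=
        Nat.cast_sub (by omega)
      have hqp : ((q - p : ℕ) : ZMod n) = (q : ZMod n) - (p : ZMod n) :=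
        Nat.cast_sub (by omega)
      rw [h5, hqp]
      linear_combination -hpq
  have hclsmem : ∀ x ∈ 𝒜, cls x ∈ Finset.range k := fun x hx' =>
    Finset.mem_range.mpr (rep x hx').1
  have hAc : 𝒜.card = ∑ d ∈ Finset.range k, (𝒜.filter fun x => cls x = d).card :=
    Finset.card_eq_sum_card_fiberwise hclsmem
  have hBc : ℬ.card = ∑ d ∈ Finset.range k, (ℬ.filter fun x => cls x = d).card :=
    Finset.card_eq_sum_card_fiberwise (fun x hx' => hclsmem x (hBA hx'))
  have key : ∀ d : ℕ, (𝒜.filter fun x => cls x = d).card + (ℬ.filter fun x => cls x = d).card ≤ 2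
      ∧ (ℬ.filter fun x => cls x = d).card ≤ 1 := by
    intro d
    have hsub : (𝒜.filter fun x => cls x = d) ⊆
        {s₀ + (d : ZMod n), s₀ + (d : ZMod n) - (k : ZMod n)} := by
      intro x hx'
      rw [Finset.mem_filter] at hx'
      obtain ⟨hxA, hxd⟩ := hx'
      rcases (rep x hxA).2 with h | h
      · rw [hxd] at h
        exact Finset.mem_insert.mpr (Or.inl h)
      · rw [hxd] at h
        exact Finset.mem_insert.mpr (Or.inr (Finset.mem_singleton.mpr h))
    have hsubB : (ℬ.filter fun x => cls x = d) ⊆ (𝒜.filter fun x => cls x = d) := by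
      intro x hx'
      rw [Finset.mem_filter] at hx' ⊢
      exact ⟨hBA hx'.1, hx'.2⟩
    by_cases hu : s₀ + (d : ZMod n) ∈ ℬ
    · have hwA : s₀ + (d : ZMod n) - (k : ZMod n) ∉ 𝒜 := by
        intro hw'
        exact (excl _ hu _ hw').2 (by ring)
      have h1 : (𝒜.filter fun x => cls x = d) ⊆ {s₀ + (d : ZMod n)} := by
        intro x hx'
        rcases Finset.mem_insert.mp (hsub hx') with h | h
        · exact Finset.mem_singleton.mpr h
        · rw [Finset.mem_singleton] at h
          exact absurd (Finset.mem_filter.mp hx').1 (h ▸ hwA)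
      have c1 : (𝒜.filter fun x => cls x = d).card ≤ 1 := by
        simpa using Finset.card_le_card h1
      have c2 : (ℬ.filter fun x => cls x = d).card ≤ 1 :=
        le_trans (Finset.card_le_card hsubB) c1
      exact ⟨by omega, c2⟩
    · by_cases hw : s₀ + (d : ZMod n) - (k : ZMod n) ∈ ℬ
      · have huA : s₀ + (d : ZMod n) ∉ 𝒜 := by
          intro hu'
          exact (excl _ hw _ hu').1 (by ring)
        have h1 : (𝒜.filter fun x => cls x = d) ⊆ {s₀ + (d : ZMod n) - (k : ZMod n)} := by
          intro x hx'
          rcases Finset.mem_insert.mp (hsub hx') with h | h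
          · exact absurd (Finset.mem_filter.mp hx').1 (h ▸ huA)
          · exact h
        have c1 : (𝒜.filter fun x => cls x = d).card ≤ 1 := by
          simpa using Finset.card_le_card h1
        have c2 : (ℬ.filter fun x => cls x = d).card ≤ 1 :=
          le_trans (Finset.card_le_card hsubB) c1
        exact ⟨by omega, c2⟩
      · have hBempty : (ℬ.filter fun x => cls x = d) = ∅ := by
          rw [Finset.eq_empty_iff_forall_notMem]
          intro x hx'
          have hxB : x ∈ ℬ := (Finset.mem_filter.mp hx').1
          rcases Finset.mem_insert.mp (hsub (hsubB hx')) with h | h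
          · exact hu (h ▸ hxB)
          · rw [Finset.mem_singleton] at h
            exact hw (h ▸ hxB)
        have c1 : (𝒜.filter fun x => cls x = d).card ≤ 2 := by
          refine le_trans (Finset.card_le_card hsub) ?_
          refine le_trans (Finset.card_insert_le _ _) ?_
          simp
        rw [hBempty]
        simp [c1]
  constructor
  · rw [hAc, hBc, ← Finset.sum_add_distrib]
    calc ∑ d ∈ Finset.range k, ((𝒜.filter fun x => cls x = d).card
          + (ℬ.filter fun x => cls x = d).card)
        ≤ ∑ _d ∈ Finset.range k, 2 := Finset.sum_le_sum (fun d _ => (key d).1)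
      _ = 2 * k := by simp [mul_comm]
  · rw [hBc]
    calc ∑ d ∈ Finset.range k, (ℬ.filter fun x => cls x = d).card
        ≤ ∑ _d ∈ Finset.range k, 1 := Finset.sum_le_sum (fun d _ => (key d).2)
      _ = k := by simp

lemma exists_perm_image {γ : Type*} [Fintype γ] [DecidableEq γ] (T T' : Finset γ)
    (h : T.card = T'.card) : ∃ ρ : Equiv.Perm γ, T.image ρ = T' := by
  have e : {x // x ∈ T} ≃ {x // x ∈ T'} :=
    Fintype.equivOfCardEq (by simp only [Fintype.card_coe, h])
  refine ⟨e.extendSubtype, ?_⟩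
  apply Finset.eq_of_subset_of_card_le
  · intro y hy
    obtain ⟨x, hx, rfl⟩ := Finset.mem_image.mp hy
    exact e.extendSubtype_mem x hx
  · rw [Finset.card_image_of_injective _ e.extendSubtype.injective, h]

lemma class_card_eq {n : ℕ} [NeZero n] (T T' : Finset (ZMod n)) (S S' : Finset (Fin n))
    (h1 : T.card = T'.card) (h3 : S.card = S'.card) :
    (univ.filter fun σ : ZMod n ≃ Fin n => T.image σ = S).card
      = (univ.filter fun σ : ZMod n ≃ Fin n => T'.image σ = S').card := by
  obtain ⟨ρ, hρ⟩ := exists_perm_image T' T h1.symm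
  obtain ⟨τ, hτ⟩ := exists_perm_image S S' h3
  apply Finset.card_bij' (fun σ _ => (ρ.trans σ).trans τ) (fun σ' _ => (ρ.symm.trans σ').trans τ.symm)
  · intro σ hσ
    rw [Finset.mem_filter] at hσ ⊢
    refine ⟨Finset.mem_univ _, ?_⟩
    have hcomp : ⇑((ρ.trans σ).trans τ) = ⇑τ ∘ ⇑σ ∘ ⇑ρ := rfl
    rw [hcomp, ← Function.comp_assoc, ← Finset.image_image, ← Finset.image_image, hρ, hσ.2, hτ]
  · intro σ' hσ'
    rw [Finset.mem_filter] at hσ' ⊢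
    refine ⟨Finset.mem_univ _, ?_⟩
    have hcomp : ⇑((ρ.symm.trans σ').trans τ.symm) = ⇑τ.symm ∘ ⇑σ' ∘ ⇑ρ.symm := rfl
    have hρ' : T.image ⇑ρ.symm = T' := by
      rw [← hρ, Finset.image_image]
      simp
    have hτ' : S'.image ⇑τ.symm = S := by
      rw [← hτ, Finset.image_image]
      simp
    rw [hcomp, ← Function.comp_assoc, ← Finset.image_image, ← Finset.image_image, hρ', hσ'.2, hτ']
  · intro σ hσ
    ext x
    simp
  · intro σ' hσ'
    ext x
    simp

lemma class_card_mul {n k : ℕ} [NeZero n] (T : Finset (ZMod n)) (S : Finset (Fin n))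
    (hT : T.card = k) (hS : S.card = k) :
    (univ.filter fun σ : ZMod n ≃ Fin n => T.image σ = S).card * n.choose k = n.factorial := by
  have e0 : ZMod n ≃ Fin n := Fintype.equivOfCardEq (by simp [ZMod.card])
  have hpart : ((univ : Finset (ZMod n ≃ Fin n))).card
      = ∑ S' ∈ (univ : Finset (Fin n)).powersetCard k,
          (univ.filter fun σ : ZMod n ≃ Fin n => T.image σ = S').card := by
    apply Finset.card_eq_sum_card_fiberwise
    intro σ _
    simp only [Finset.mem_coe]
    rw [Finset.mem_powersetCard_univ, Finset.card_image_of_injective _ σ.injective, hT]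
  have hall : ∀ S' ∈ (univ : Finset (Fin n)).powersetCard k,
      (univ.filter fun σ : ZMod n ≃ Fin n => T.image σ = S').card
        = (univ.filter fun σ : ZMod n ≃ Fin n => T.image σ = S).card := by
    intro S' hS'
    exact class_card_eq T T S' S rfl
      (by rw [Finset.mem_powersetCard_univ.mp hS', hS])
  rw [Finset.sum_congr rfl hall, Finset.sum_const, Finset.card_powersetCard] at hpart
  simp only [Finset.card_univ, Fintype.card_fin, smul_eq_mul, Fintype.card_equiv e0,
    ZMod.card] at hpart
  rw [mul_comm]
  exact hpart.symm

lemma sum_arcs {n k : ℕ} [NeZero n] (hkn : k ≤ n) (F : Finset (Finset (Fin n)))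
    (hF : ∀ S ∈ F, S.card = k)
    (T₀ : Finset (ZMod n)) (S₀ : Finset (Fin n)) (hT₀ : T₀.card = k) (hS₀ : S₀.card = k) :
    ∑ σ : ZMod n ≃ Fin n, (univ.filter fun i : ZMod n => (interval n k i).image σ ∈ F).card
      = F.card * (n * (univ.filter fun σ : ZMod n ≃ Fin n => T₀.image σ = S₀).card) := by
  classical
  set κ := (univ.filter fun σ : ZMod n ≃ Fin n => T₀.image σ = S₀).card with hκdef
  have inner : ∀ i : ZMod n,
      (univ.filter fun σ : ZMod n ≃ Fin n => (interval n k i).image σ ∈ F).card = F.card * κ := by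
    intro i
    have hfib := Finset.card_eq_sum_card_fiberwise
      (s := univ.filter fun σ : ZMod n ≃ Fin n => (interval n k i).image σ ∈ F) (t := F)
      (f := fun σ : ZMod n ≃ Fin n => (interval n k i).image σ)
      (fun σ hσ => (Finset.mem_filter.mp hσ).2)
    rw [hfib]
    have heach : ∀ S ∈ F,
        (((univ.filter fun σ : ZMod n ≃ Fin n => (interval n k i).image σ ∈ F)).filter
          (fun σ : ZMod n ≃ Fin n => (interval n k i).image σ = S)).card = κ := by
      intro S hS
      have hsame : ((univ.filter fun σ : ZMod n ≃ Fin n => (interval n k i).image σ ∈ F)).filter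
            (fun σ : ZMod n ≃ Fin n => (interval n k i).image σ = S)
          = univ.filter (fun σ : ZMod n ≃ Fin n => (interval n k i).image σ = S) := by
        rw [Finset.filter_filter]
        apply Finset.filter_congr
        intro σ _
        constructor
        · exact fun h => h.2
        · exact fun h => ⟨h ▸ hS, h⟩
      rw [hsame, hκdef]
      exact class_card_eq _ _ _ _ (by rw [interval_card hkn, hT₀]) (by rw [hF S hS, hS₀])
    rw [Finset.sum_congr rfl heach, Finset.sum_const, smul_eq_mul]
  calc ∑ σ : ZMod n ≃ Fin n, (univ.filter fun i : ZMod n => (interval n k i).image σ ∈ F).card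
      = ∑ σ : ZMod n ≃ Fin n, ∑ i : ZMod n,
          (if (interval n k i).image σ ∈ F then 1 else 0) :=
        Finset.sum_congr rfl (fun σ _ => Finset.card_filter _ _)
    _ = ∑ i : ZMod n, ∑ σ : ZMod n ≃ Fin n,
          (if (interval n k i).image σ ∈ F then 1 else 0) := Finset.sum_comm
    _ = ∑ i : ZMod n, (univ.filter fun σ : ZMod n ≃ Fin n => (interval n k i).image σ ∈ F).card :=
        Finset.sum_congr rfl (fun i _ => (Finset.card_filter _ _).symm)
    _ = ∑ _i : ZMod n, F.card * κ := Finset.sum_congr rfl (fun i _ => inner i)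
    _ = F.card * (n * κ) := by
        rw [Finset.sum_const, Finset.card_univ, ZMod.card, smul_eq_mul]
        ring

end Stmt10Aux

open Stmt10Aux in
theorem stmt_10 (n k : ℕ) (hn : 2 * k ≤ n) (c : ℝ) (hc : 1 ≤ c)
    (A B : Finset (Finset (Fin n)))
    (hA : ∀ a ∈ A, a.card = k) (hBA : B ⊆ A)
    (hcross : ∀ b ∈ B, ∀ a ∈ A, (b ∩ a).Nonempty) :
    (A.card : ℝ) + c * B.card ≤
      max (n.choose k : ℝ) ((c + 1) * (n - 1).choose (k - 1)) := by
  classical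
  rcases Nat.eq_zero_or_pos k with rfl | hk1
  · -- k = 0 : B must be empty
    have hB0 : B = ∅ := by
      rcases Finset.eq_empty_or_nonempty B with h | ⟨b, hb⟩
      · exact h
      · exfalso
        have h1 := hcross b hb b (hBA hb)
        have h2 := hA b (hBA hb)
        rw [Finset.card_eq_zero] at h2
        rw [h2] at h1
        simp at h1
    have hAcard : A.card ≤ n.choose 0 := by
      have hsub : A ⊆ (univ : Finset (Fin n)).powersetCard 0 :=
        fun a ha => Finset.mem_powersetCard_univ.mpr (hA a ha)
      have h := Finset.card_le_card hsub
      rwa [Finset.card_powersetCard, Finset.card_univ, Fintype.card_fin] at h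
    refine le_trans ?_ (le_max_left _ _)
    rw [hB0]
    simp only [Finset.card_empty, Nat.cast_zero, mul_zero, add_zero]
    exact_mod_cast hAcard
  · have hn0 : 0 < n := by omega
    haveI : NeZero n := ⟨hn0.ne'⟩
    have hkn : k ≤ n := by omega
    have e0 : ZMod n ≃ Fin n := Fintype.equivOfCardEq (by simp [ZMod.card])
    set T₀ := interval n k 0 with hT₀def
    set S₀ := T₀.image e0 with hS₀def
    have hT₀ : T₀.card = k := interval_card hkn 0
    have hS₀ : S₀.card = k := by
      rw [hS₀def, Finset.card_image_of_injective _ e0.injective, hT₀]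
    set κ := (univ.filter fun σ : ZMod n ≃ Fin n => T₀.image σ = S₀).card with hκdef
    have hκmul : κ * n.choose k = n.factorial := class_card_mul T₀ S₀ hT₀ hS₀
    have hκpos : 0 < κ := by
      rcases Nat.eq_zero_or_pos κ with h | h
      · exfalso
        rw [h, zero_mul] at hκmul
        exact (Nat.factorial_pos n).ne hκmul
      · exact h
    have SA : ∑ σ : ZMod n ≃ Fin n,
        (univ.filter fun i : ZMod n => (interval n k i).image σ ∈ A).card = A.card * (n * κ) :=
      sum_arcs hkn A hA T₀ S₀ hT₀ hS₀
    have SB : ∑ σ : ZMod n ≃ Fin n,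
        (univ.filter fun i : ZMod n => (interval n k i).image σ ∈ B).card = B.card * (n * κ) :=
      sum_arcs hkn B (fun S hS => hA S (hBA hS)) T₀ S₀ hT₀ hS₀
    have perσ : ∀ σ : ZMod n ≃ Fin n,
        ((univ.filter fun i : ZMod n => (interval n k i).image σ ∈ A).card : ℝ)
          + c * ((univ.filter fun i : ZMod n => (interval n k i).image σ ∈ B).card : ℝ)
          ≤ max (n : ℝ) ((c + 1) * k) := by
      intro σ
      rcases Finset.eq_empty_or_nonempty
          (univ.filter fun i : ZMod n => (interval n k i).image σ ∈ B) with hb0 | hbne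
      · rw [hb0]
        have ha : ((univ.filter fun i : ZMod n => (interval n k i).image σ ∈ A).card : ℝ) ≤ n := by
          have h1 := Finset.card_filter_le (univ : Finset (ZMod n))
            (fun i : ZMod n => (interval n k i).image σ ∈ A)
          rw [Finset.card_univ, ZMod.card] at h1
          exact_mod_cast h1
        simpa using le_trans ha (le_max_left _ _)
      · obtain ⟨s₀, hs₀⟩ := hbne
        have hsub : (univ.filter fun i : ZMod n => (interval n k i).image σ ∈ B)
            ⊆ (univ.filter fun i : ZMod n => (interval n k i).image σ ∈ A) := by
          intro i hi
          rw [Finset.mem_filter] at hi ⊢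
          exact ⟨hi.1, hBA hi.2⟩
        have hxc : ∀ i ∈ (univ.filter fun i : ZMod n => (interval n k i).image σ ∈ B),
            ∀ j ∈ (univ.filter fun i : ZMod n => (interval n k i).image σ ∈ A),
            ∃ p < k, ∃ q < k, i + (p : ZMod n) = j + (q : ZMod n) := by
          intro i hi j hj
          rw [Finset.mem_filter] at hi hj
          obtain ⟨x, hx⟩ := hcross _ hi.2 _ hj.2
          rw [Finset.mem_inter] at hx
          obtain ⟨y, hy, hxy⟩ := Finset.mem_image.mp hx.1
          obtain ⟨y', hy', hxy'⟩ := Finset.mem_image.mp hx.2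
          have hyy : y = y' := σ.injective (by rw [hxy, hxy'])
          obtain ⟨p, hp, hyp⟩ := mem_interval.mp hy
          obtain ⟨q, hq, hyq⟩ := mem_interval.mp hy'
          exact ⟨p, hp, q, hq, by rw [← hyp, hyy, hyq]⟩
        obtain ⟨h1, h2⟩ := cyclic hk1 hn _ _ hsub hxc s₀ hs₀
        have h1' : ((univ.filter fun i : ZMod n => (interval n k i).image σ ∈ A).card : ℝ)
            + ((univ.filter fun i : ZMod n => (interval n k i).image σ ∈ B).card : ℝ)
            ≤ 2 * k := by exact_mod_cast h1
        have h2' : ((univ.filter fun i : ZMod n => (interval n k i).image σ ∈ B).card : ℝ)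
            ≤ k := by exact_mod_cast h2
        refine le_trans ?_ (le_max_right _ _)
        have h3 : (c - 1) * ((univ.filter fun i : ZMod n => (interval n k i).image σ ∈ B).card : ℝ)
            ≤ (c - 1) * k := mul_le_mul_of_nonneg_left h2' (by linarith)
        nlinarith
    have castSA : (∑ σ : ZMod n ≃ Fin n,
        ((univ.filter fun i : ZMod n => (interval n k i).image σ ∈ A).card : ℝ))
        = (A.card : ℝ) * ((n : ℝ) * (κ : ℝ)) := by
      rw [← Nat.cast_sum, SA]
      push_cast
      ring
    have castSB : (∑ σ : ZMod n ≃ Fin n,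
        ((univ.filter fun i : ZMod n => (interval n k i).image σ ∈ B).card : ℝ))
        = (B.card : ℝ) * ((n : ℝ) * (κ : ℝ)) := by
      rw [← Nat.cast_sum, SB]
      push_cast
      ring
    have htotal : (A.card : ℝ) * ((n : ℝ) * (κ : ℝ))
        + c * ((B.card : ℝ) * ((n : ℝ) * (κ : ℝ)))
        ≤ (n.factorial : ℝ) * max (n : ℝ) ((c + 1) * k) := by
      calc (A.card : ℝ) * ((n : ℝ) * (κ : ℝ)) + c * ((B.card : ℝ) * ((n : ℝ) * (κ : ℝ)))
          = ∑ σ : ZMod n ≃ Fin n,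
              (((univ.filter fun i : ZMod n => (interval n k i).image σ ∈ A).card : ℝ)
                + c * ((univ.filter fun i : ZMod n => (interval n k i).image σ ∈ B).card : ℝ)) := by
            rw [Finset.sum_add_distrib, castSA, ← Finset.mul_sum, castSB]
        _ ≤ ∑ _σ : ZMod n ≃ Fin n, max (n : ℝ) ((c + 1) * k) :=
            Finset.sum_le_sum (fun σ _ => perσ σ)
        _ = (n.factorial : ℝ) * max (n : ℝ) ((c + 1) * k) := by
            rw [Finset.sum_const, Finset.card_univ, Fintype.card_equiv e0, ZMod.card,
              nsmul_eq_mul]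
    have hid : k * n.choose k = n * ((n - 1).choose (k - 1)) := by
      obtain ⟨m, rfl⟩ : ∃ m, n = m + 1 := ⟨n - 1, by omega⟩
      obtain ⟨l, rfl⟩ : ∃ l, k = l + 1 := ⟨k - 1, by omega⟩
      simpa [mul_comm] using (Nat.add_one_mul_choose_eq m l).symm
    have hidR : (k : ℝ) * (n.choose k : ℝ) = (n : ℝ) * ((n - 1).choose (k - 1) : ℝ) := by
      exact_mod_cast congrArg (Nat.cast : ℕ → ℝ) hid
    have hchooseM : (n.choose k : ℝ) * max (n : ℝ) ((c + 1) * k)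
        ≤ max (n.choose k : ℝ) ((c + 1) * ((n - 1).choose (k - 1) : ℝ)) * n := by
      rw [mul_max_of_nonneg _ _ (by positivity : (0 : ℝ) ≤ (n.choose k : ℝ))]
      apply max_le
      · exact mul_le_mul_of_nonneg_right (le_max_left _ _) (by positivity)
      · have he : (n.choose k : ℝ) * ((c + 1) * k)
            = ((c + 1) * ((n - 1).choose (k - 1) : ℝ)) * n := by
          have : (n.choose k : ℝ) * ((c + 1) * k) = (c + 1) * ((k : ℝ) * (n.choose k : ℝ)) := by
            ring
          rw [this, hidR]
          ring
        rw [he]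
        exact mul_le_mul_of_nonneg_right (le_max_right _ _) (by positivity)
    have hnf : (n.factorial : ℝ) = (κ : ℝ) * (n.choose k : ℝ) := by
      exact_mod_cast hκmul.symm
    have hfinal : ((A.card : ℝ) + c * B.card) * ((n : ℝ) * (κ : ℝ))
        ≤ max (n.choose k : ℝ) ((c + 1) * ((n - 1).choose (k - 1) : ℝ)) * ((n : ℝ) * (κ : ℝ)) := by
      have e1 : ((A.card : ℝ) + c * B.card) * ((n : ℝ) * (κ : ℝ))
          = (A.card : ℝ) * ((n : ℝ) * (κ : ℝ)) + c * ((B.card : ℝ) * ((n : ℝ) * (κ : ℝ))) := by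
        ring
      rw [e1]
      refine le_trans htotal ?_
      rw [hnf]
      calc (κ : ℝ) * (n.choose k : ℝ) * max (n : ℝ) ((c + 1) * k)
          = (κ : ℝ) * ((n.choose k : ℝ) * max (n : ℝ) ((c + 1) * k)) := by ring
        _ ≤ (κ : ℝ) * (max (n.choose k : ℝ) ((c + 1) * ((n - 1).choose (k - 1) : ℝ)) * n) :=
            mul_le_mul_of_nonneg_left hchooseM (by positivity)
        _ = max (n.choose k : ℝ) ((c + 1) * ((n - 1).choose (k - 1) : ℝ)) * ((n : ℝ) * (κ : ℝ)) := by
            ring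
    have hpos : (0 : ℝ) < (n : ℝ) * (κ : ℝ) := by
      have : (0 : ℝ) < (n : ℝ) := by exact_mod_cast hn0
      have h2 : (0 : ℝ) < (κ : ℝ) := by exact_mod_cast hκpos
      positivity
    exact le_of_mul_le_mul_right hfinal hpos
end

section
/- Fix a cyclic permutation π of [n], n ≥ 2k, and let U(π,k) be the family of the n cyclic intervals of length k. Suppose A, B ⊂ U(π,k) with B ⊂ A and every set of B intersects every set of A. Then for any c ≥ 1, |A| + c|B| ≤ max{n, (c+1)k}. -/
open Finset

/-- Exclusion lemma: starts at forward distance between `k` and `n-k` from a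
start in `SB` cannot be in `SA`. -/
lemma key_excl (n k : ℕ) [NeZero n] (hk : 1 ≤ k) (hn : 2 * k ≤ n)
    (SA SB : Finset (ZMod n))
    (hcross : ∀ b ∈ SB, ∀ a ∈ SA, ∃ p < k, ∃ q < k,
      a + (p : ZMod n) = b + (q : ZMod n))
    (b : ZMod n) (hb : b ∈ SB) (j : ℕ) (hj : j ≤ n - 2 * k) :
    b + ((k + j : ℕ) : ZMod n) ∉ SA := by
  intro ha
  obtain ⟨p, hp, q, hq, hpq⟩ := hcross b hb _ ha
  have h1 : ((k + j + p : ℕ) : ZMod n) = ((q : ℕ) : ZMod n) := by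
    push_cast at hpq ⊢
    linear_combination hpq
  have h2 : k + j + p < n := by omega
  have h3 : q < n := by omega
  have h4 := congrArg ZMod.val h1
  rw [ZMod.val_cast_of_lt h2, ZMod.val_cast_of_lt h3] at h4
  omega

/-- Core counting lemma: if `SB ⊆ SA` are nonempty families of starts of
cross-intersecting cyclic intervals of length `k`, then `|SA| + |SB| ≤ 2k`. -/
lemma key (n k : ℕ) [NeZero n] (hk : 1 ≤ k) (hn : 2 * k ≤ n)
    (SA SB : Finset (ZMod n)) (hBA : SB ⊆ SA)
    (hcross : ∀ b ∈ SB, ∀ a ∈ SA, ∃ p < k, ∃ q < k,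
      a + (p : ZMod n) = b + (q : ZMod n))
    (hSB : SB.Nonempty) :
    SA.card + SB.card ≤ 2 * k := by
  classical
  have hn1 : 1 ≤ n := Nat.one_le_iff_ne_zero.mpr (NeZero.ne n)
  obtain ⟨b0, hb0⟩ := hSB
  set L : ℕ := n - 2 * k + 1 with hL
  set ψ : ZMod n → ℕ := fun x => (x - (b0 + 1)).val with hψ
  have hψinj : Function.Injective ψ := by
    intro x y h
    have h2 : x - (b0 + 1) = y - (b0 + 1) := ZMod.val_injective n h
    have := congrArg (· + (b0 + 1)) h2
    simpa using this
  have hψlt : ∀ x, ψ x < n := fun x => ZMod.val_lt _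
  have hcast : ∀ x : ZMod n, ((ψ x : ℕ) : ZMod n) = x - (b0 + 1) :=
    fun x => ZMod.natCast_rightInverse _
  -- no arc wraps past b0
  have hvb : ∀ b ∈ SB, ψ (b + (k : ℕ)) + L ≤ n := by
    intro b hb
    by_contra hcon
    push_neg at hcon
    set v := ψ (b + (k : ℕ)) with hv
    have hvlt : v < n := hψlt _
    set j : ℕ := n - 1 - v with hjdef
    have hj : j ≤ n - 2 * k := by omega
    have heq : b + ((k + j : ℕ) : ZMod n) = b0 := by
      have h1 : ((v : ℕ) : ZMod n) = b + (k : ℕ) - (b0 + 1) := hcast _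
      have hvj : v + j = n - 1 := by omega
      have h2 : ((n - 1 : ℕ) : ZMod n) = -1 := by
        rw [Nat.cast_sub hn1, ZMod.natCast_self]
        ring
      calc b + ((k + j : ℕ) : ZMod n)
          = (b + (k : ℕ) - (b0 + 1)) + (j : ℕ) + (b0 + 1) := by push_cast; ring
        _ = ((v + j : ℕ) : ZMod n) + (b0 + 1) := by rw [← h1]; push_cast; ring
        _ = b0 := by rw [hvj, h2]; ring
    have hmem : b + ((k + j : ℕ) : ZMod n) ∈ SA := by rw [heq]; exact hBA hb0
    exact key_excl n k hk hn SA SB hcross b hb j hj hmem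
  -- ψ-value of points in the arcs
  have hval : ∀ b ∈ SB, ∀ j < L,
      ψ (b + ((k + j : ℕ) : ZMod n)) = ψ (b + (k : ℕ)) + j := by
    intro b hb j hjL
    have h1 := hvb b hb
    have hlt : ψ (b + (k : ℕ)) + j < n := by omega
    have h2 : b + ((k + j : ℕ) : ZMod n) - (b0 + 1)
        = ((ψ (b + (k : ℕ)) + j : ℕ) : ZMod n) := by
      have h3 := hcast (b + (k : ℕ))
      push_cast
      linear_combination -h3
    show (b + ((k + j : ℕ) : ZMod n) - (b0 + 1)).val = ψ (b + (k : ℕ)) + j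
    rw [h2, ZMod.val_cast_of_lt hlt]
  set U : Finset (ZMod n) :=
    SB.biUnion (fun b => (range L).image (fun j => b + ((k + j : ℕ) : ZMod n)))
    with hU
  have hdisj : Disjoint U SA := by
    rw [Finset.disjoint_left]
    intro x hx hxA
    rw [hU, mem_biUnion] at hx
    obtain ⟨b, hb, hx2⟩ := hx
    rw [mem_image] at hx2
    obtain ⟨j, hj, rfl⟩ := hx2
    rw [mem_range] at hj
    exact key_excl n k hk hn SA SB hcross b hb j (by omega) hxA
  have hcard_un : U.card + SA.card ≤ n := by
    calc U.card + SA.card = (U ∪ SA).card := (Finset.card_union_of_disjoint hdisj).symm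
      _ ≤ Fintype.card (ZMod n) := Finset.card_le_univ _
      _ = n := ZMod.card n
  -- lower bound on |U|
  set V : Finset ℕ := U.image ψ with hV
  have hVcard : V.card = U.card := Finset.card_image_of_injective U hψinj
  set T : Finset ℕ := SB.image (fun b => ψ (b + (k : ℕ))) with hT
  have hTinj : Function.Injective fun b : ZMod n => ψ (b + (k : ℕ)) := by
    intro x y h
    have := hψinj h
    exact add_right_cancel this
  have hTcard : T.card = SB.card := Finset.card_image_of_injective SB hTinj
  have hTne : T.Nonempty := ⟨_, mem_image_of_mem _ hb0⟩
  set M := T.max' hTne with hM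
  obtain ⟨bM, hbM, hbMv⟩ := mem_image.mp (T.max'_mem hTne)
  have hsub : T ∪ (range L).image (fun j => M + j) ⊆ V := by
    intro x hx
    rcases mem_union.mp hx with hx | hx
    · obtain ⟨b, hb, rfl⟩ := mem_image.mp hx
      apply mem_image.mpr
      refine ⟨b + ((k + 0 : ℕ) : ZMod n), ?_, ?_⟩
      · exact mem_biUnion.mpr ⟨b, hb,
          mem_image.mpr ⟨0, mem_range.mpr (by omega), rfl⟩⟩
      · rw [hval b hb 0 (by omega)]
        omega
    · obtain ⟨j, hj, rfl⟩ := mem_image.mp hx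
      refine mem_image.mpr ⟨bM + ((k + j : ℕ) : ZMod n),
        mem_biUnion.mpr ⟨bM, hbM, mem_image.mpr ⟨j, hj, rfl⟩⟩, ?_⟩
      rw [hval bM hbM j (mem_range.mp hj), hbMv]
  have hinter : T ∩ (range L).image (fun j => M + j) ⊆ {M} := by
    intro x hx
    obtain ⟨hxT, hxM⟩ := mem_inter.mp hx
    obtain ⟨j, _, rfl⟩ := mem_image.mp hxM
    have hle : M + j ≤ M := T.le_max' _ hxT
    have : j = 0 := by omega
    simp [this]
  have hVlb : T.card + L ≤ V.card + 1 := by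
    have h1 : (T ∪ (range L).image (fun j => M + j)).card ≤ V.card :=
      card_le_card hsub
    have h2 := Finset.card_union_add_card_inter T ((range L).image (fun j => M + j))
    have h3 : ((range L).image (fun j => M + j)).card = L := by
      rw [Finset.card_image_of_injective _ (add_right_injective M), card_range]
    have h4 : (T ∩ (range L).image (fun j => M + j)).card ≤ 1 :=
      le_trans (card_le_card hinter) (by simp)
    omega
  omega

theorem stmt_11 (n k : ℕ) (hn : 2 * k ≤ n) (c : ℝ) (hc : 1 ≤ c)
    (π : ZMod n ≃ Fin n)
    (A B : Set (Finset (Fin n))) (hBA : B ⊆ A) (hA : A ⊆ cycInt n π k)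
    (hcross : ∀ b ∈ B, ∀ a ∈ A, (b ∩ a).Nonempty) :
    (A.ncard : ℝ) + c * B.ncard ≤ max (n : ℝ) ((c + 1) * k) := by
  classical
  rcases Nat.eq_zero_or_pos n with rfl | hn1
  · exact (π 0).elim0
  haveI : NeZero n := ⟨hn1.ne'⟩
  set I : ZMod n → Finset (Fin n) :=
    fun t => (Finset.range k).image fun s : ℕ => π (t + (s : ZMod n)) with hI
  set SA : Finset (ZMod n) := Finset.univ.filter (fun t => I t ∈ A) with hSA
  set SB : Finset (ZMod n) := Finset.univ.filter (fun t => I t ∈ B) with hSB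
  have hAsub : A ⊆ I '' (SA : Set (ZMod n)) := by
    intro a ha
    obtain ⟨t, rfl⟩ := hA ha
    exact ⟨t, by simp [hSA, hI]; exact ha, rfl⟩
  have hBsub : B ⊆ I '' (SB : Set (ZMod n)) := by
    intro b hb
    obtain ⟨t, rfl⟩ := hA (hBA hb)
    exact ⟨t, by simp [hSB, hI]; exact hb, rfl⟩
  have hAcard : A.ncard ≤ SA.card := by
    calc A.ncard ≤ (I '' (SA : Set (ZMod n))).ncard :=
          Set.ncard_le_ncard hAsub ((SA : Set (ZMod n)).toFinite.image _)
      _ ≤ (SA : Set (ZMod n)).ncard := Set.ncard_image_le (SA : Set (ZMod n)).toFinite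
      _ = SA.card := Set.ncard_coe_finset _
  have hBcard : B.ncard ≤ SB.card := by
    calc B.ncard ≤ (I '' (SB : Set (ZMod n))).ncard :=
          Set.ncard_le_ncard hBsub ((SB : Set (ZMod n)).toFinite.image _)
      _ ≤ (SB : Set (ZMod n)).ncard := Set.ncard_image_le (SB : Set (ZMod n)).toFinite
      _ = SB.card := Set.ncard_coe_finset _
  rcases B.eq_empty_or_nonempty with rfl | hBne
  · have h1 : A.ncard ≤ n := by
      refine le_trans hAcard (le_trans (card_le_univ _) ?_)
      exact le_of_eq (ZMod.card n)
    have h1' : (A.ncard : ℝ) ≤ n := by exact_mod_cast h1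
    refine le_trans ?_ (le_max_left _ _)
    simpa using h1'
  · obtain ⟨b, hb⟩ := hBne
    have hk1 : 1 ≤ k := by
      by_contra hk
      have hk0 : k = 0 := by omega
      have h := hcross _ hb _ (hBA hb)
      obtain ⟨t, rfl⟩ := hA (hBA hb)
      simp [hk0] at h
    have ht0 : ∃ t0, t0 ∈ SB := by
      obtain ⟨t, rfl⟩ := hA (hBA hb)
      exact ⟨t, by simp [hSB, hI]; exact hb⟩
    obtain ⟨t0, ht0⟩ := ht0
    have hBAs : SB ⊆ SA := by
      intro t ht
      rw [hSB, mem_filter] at ht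
      rw [hSA, mem_filter]
      exact ⟨ht.1, hBA ht.2⟩
    have hcross' : ∀ bt ∈ SB, ∀ a ∈ SA, ∃ p < k, ∃ q < k,
        a + (p : ZMod n) = bt + (q : ZMod n) := by
      intro bt hbt a hat
      have hbB : I bt ∈ B := (mem_filter.mp hbt).2
      have haA : I a ∈ A := (mem_filter.mp hat).2
      obtain ⟨x, hx⟩ := hcross _ hbB _ haA
      rw [mem_inter] at hx
      obtain ⟨hxb, hxa⟩ := hx
      rw [hI] at hxb hxa
      simp only [mem_image, mem_range] at hxb hxa
      obtain ⟨q, hq, hqe⟩ := hxb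
      obtain ⟨p, hp, hpe⟩ := hxa
      exact ⟨p, hp, q, hq, π.injective (hpe.trans hqe.symm)⟩
    have hkey := key n k hk1 hn SA SB hBAs hcross' ⟨t0, ht0⟩
    have hSBk : SB.card ≤ k := by
      have := card_le_card hBAs
      omega
    have hc0 : (0 : ℝ) ≤ c := by linarith
    have h1 : (A.ncard : ℝ) ≤ SA.card := by exact_mod_cast hAcard
    have h2 : (B.ncard : ℝ) ≤ SB.card := by exact_mod_cast hBcard
    refine le_trans ?_ (le_max_right _ _)
    have hkey' : (SA.card : ℝ) + SB.card ≤ 2 * k := by exact_mod_cast hkey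
    have hSBk' : (SB.card : ℝ) ≤ k := by exact_mod_cast hSBk
    nlinarith [mul_le_mul_of_nonneg_left h2 hc0,
      mul_nonneg (by linarith : (0:ℝ) ≤ c - 1)
        (by linarith : (0:ℝ) ≤ (k : ℝ) - SB.card)]
end

section
/- Let n ≥ 2k and c ≥ 1. Suppose A, B ⊂ ([n] choose k) are cross-intersecting and |B| ≤ |A|. Then |A| + c|B| ≤ max{ binom(n,k), (c+1)*binom(n-1,k-1) }. -/
open Finset Finset.Colex FinsetFamily

theorem ground_local_lym {n : ℕ} (s : Finset (Fin n)) (𝒜 : Finset (Finset (Fin n))) {r : ℕ}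
    (hr : 1 ≤ r) (hrs : r ≤ #s)
    (hsub : ∀ A ∈ 𝒜, A ⊆ s) (hsized : (𝒜 : Set (Finset (Fin n))).Sized r) :
    (#𝒜) * r ≤ #(∂ 𝒜) * (#s - r + 1) := by
  classical
  have key : #(𝒜.sigma fun A => A) ≤ #((∂ 𝒜).sigma fun t => s \ t) := by
    apply card_le_card_of_injOn (fun p => ⟨p.1.erase p.2, p.2⟩)
    · rintro ⟨a1, a2⟩ hp
      simp only [mem_sigma, mem_coe] at hp ⊢
      refine ⟨erase_mem_shadow hp.1 hp.2, ?_⟩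
      simp only [mem_sdiff, mem_erase]
      exact ⟨hsub _ hp.1 hp.2, fun h => h.1 rfl⟩
    · rintro ⟨a1, a2⟩ hp ⟨b1, b2⟩ hq h
      simp only [mem_sigma, mem_coe] at hp hq
      simp only [Sigma.mk.inj_iff] at h
      obtain ⟨h1, h2⟩ := h
      have h2' : a2 = b2 := eq_of_heq h2
      subst h2'
      have : a1 = b1 := by
        rw [← insert_erase hp.2, ← insert_erase hq.2, h1]
      simp [this]
  rw [card_sigma, card_sigma] at key
  calc #𝒜 * r = ∑ A ∈ 𝒜, #A := by
        rw [Finset.sum_congr rfl fun A hA => hsized hA, sum_const, smul_eq_mul]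
    _ ≤ ∑ t ∈ ∂ 𝒜, #(s \ t) := key
    _ ≤ #(∂ 𝒜) * (#s - r + 1) := by
        rw [← smul_eq_mul, ← sum_const]
        apply Finset.sum_le_sum
        intro t ht
        obtain ⟨Aa, hAa, hta, _⟩ := (mem_shadow_iterate_iff_exists_sdiff (k := 1)).1 (by simpa using ht)
        have h1 : t ⊆ s := hta.trans (hsub _ hAa)
        rw [card_sdiff_of_subset h1, hsized.shadow ht]
        omega

theorem ground_iter_lym {n : ℕ} (s : Finset (Fin n)) {r : ℕ} (hrs : r ≤ #s) :
    ∀ (i : ℕ), i ≤ r → ∀ (𝒜 : Finset (Finset (Fin n))),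
    (∀ A ∈ 𝒜, A ⊆ s) → ((𝒜 : Set (Finset (Fin n))).Sized r) →
    (#𝒜) * (#s).choose (r - i) ≤ #(∂^[i] 𝒜) * (#s).choose r := by
  intro i
  induction i with
  | zero => intro _ 𝒜 _ _; simp
  | succ i ih =>
    intro hir 𝒜 hsub hsized
    have hi : i ≤ r := by omega
    set G := ∂^[i] 𝒜 with hG
    set j := r - i with hj
    have hj1 : 1 ≤ j := by omega
    have hjs : j ≤ #s := by omega
    have hGsized : (G : Set (Finset (Fin n))).Sized j := by
      have := hsized.shadow_iterate (k := i); exact this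
    have hGsub : ∀ t ∈ G, t ⊆ s := by
      intro t ht
      obtain ⟨Aa, hAa, hta, _⟩ := (mem_shadow_iterate_iff_exists_sdiff).1 ht
      exact hta.trans (hsub _ hAa)
    have hloc : #G * j ≤ #(∂ G) * (#s - j + 1) := ground_local_lym s G hj1 hjs hGsub hGsized
    have hIH : #𝒜 * (#s).choose j ≤ #G * (#s).choose r := ih hi 𝒜 hsub hsized
    have hid : (#s).choose j * j = (#s).choose (j - 1) * (#s - j + 1) := by
      have := Nat.choose_succ_right_eq (#s) (j - 1)
      have h1 : j - 1 + 1 = j := by omega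
      have h2 : #s - (j - 1) = #s - j + 1 := by omega
      rw [h1, h2] at this
      exact this
    have chain : #𝒜 * (#s).choose (j - 1) * (#s - j + 1) ≤ #(∂ G) * (#s).choose r * (#s - j + 1) := by
      calc #𝒜 * (#s).choose (j - 1) * (#s - j + 1) = #𝒜 * ((#s).choose j * j) := by
            rw [hid]; ring
        _ ≤ #G * (#s).choose r * j := by
            rw [← mul_assoc]
            exact Nat.mul_le_mul_right j hIH
        _ = (#G * j) * (#s).choose r := by ring
        _ ≤ (#(∂ G) * (#s - j + 1)) * (#s).choose r := Nat.mul_le_mul_right _ hloc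
        _ = #(∂ G) * (#s).choose r * (#s - j + 1) := by ring
    have hpos : 0 < #s - j + 1 := by omega
    have hfin : #𝒜 * (#s).choose (j - 1) ≤ #(∂ G) * (#s).choose r :=
      Nat.le_of_mul_le_mul_right chain hpos
    have hstep : ∂^[i + 1] 𝒜 = ∂ G := by rw [hG, Function.iterate_succ_apply']
    have hjj : r - (i + 1) = j - 1 := by omega
    rw [hjj, hstep]
    exact hfin

theorem exists_initSeg_aux {n r b : ℕ} (t0 : Fin n) (ht0 : ∀ x : Fin n, x ≤ t0)
    (hb : b ≤ (#((univ : Finset (Fin n)).erase t0)).choose r) :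
    ∃ 𝒞 : Finset (Finset (Fin n)), #𝒞 = b ∧ IsInitSeg 𝒞 r ∧
      ∀ t ∈ 𝒞, t ⊆ (univ : Finset (Fin n)).erase t0 := by
  classical
  set s := (univ : Finset (Fin n)).erase t0 with hs
  set P := Finset.powersetCard r s with hP
  set PC : Finset (Colex (Finset (Fin n))) := P.image toColex with hPC
  have hPCcard : #PC = #P := Finset.card_image_of_injective _ toColex.injective
  have hbP : b ≤ #PC := by
    rw [hPCcard, hP, Finset.card_powersetCard]; exact hb
  set f := PC.orderEmbOfFin rfl with hf
  set J : Finset (Fin #PC) := univ.filter (fun j : Fin #PC => (j : ℕ) < b) with hJ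
  have hJeq : J = (univ : Finset (Fin b)).map (Fin.castLEEmb hbP) := by
    ext j
    simp only [hJ, mem_filter, mem_univ, true_and, mem_map]
    constructor
    · intro h; exact ⟨⟨(j : ℕ), h⟩, rfl⟩
    · rintro ⟨i, rfl⟩; simp [Fin.castLEEmb]
  have hJcard : #J = b := by rw [hJeq, Finset.card_map, card_univ, Fintype.card_fin]
  set 𝒞 : Finset (Finset (Fin n)) := J.image (fun j => ofColex (f j)) with h𝒞
  have hinj : Function.Injective (fun j : Fin #PC => ofColex (f j)) := by
    intro a b hab
    exact f.injective (ofColex.injective hab)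
  have h𝒞card : #𝒞 = b := by
    rw [h𝒞, Finset.card_image_of_injective _ hinj, hJcard]
  have hmem_iff : ∀ x : Colex (Finset (Fin n)), x ∈ PC ↔ ofColex x ∈ P := by
    intro x
    constructor
    · intro hx
      obtain ⟨u, hu, rfl⟩ := Finset.mem_image.1 hx
      exact hu
    · intro h
      exact Finset.mem_image.2 ⟨_, h, rfl⟩
  have hmemP : ∀ j : Fin #PC, ofColex (f j) ∈ P := fun j =>
    (hmem_iff _).1 (Finset.orderEmbOfFin_mem _ _ _)
  have hsub : ∀ t ∈ 𝒞, t ⊆ s := by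
    intro t ht
    obtain ⟨j, _, rfl⟩ := Finset.mem_image.1 ht
    exact (Finset.mem_powersetCard.1 (hmemP j)).1
  refine ⟨𝒞, h𝒞card, ⟨?_, ?_⟩, hsub⟩
  · intro t ht
    simp only [Finset.mem_coe] at ht
    obtain ⟨j, _, rfl⟩ := Finset.mem_image.1 ht
    exact (Finset.mem_powersetCard.1 (hmemP j)).2
  · rintro u t hu ⟨hlt, htr⟩
    obtain ⟨j, hj, rfl⟩ := Finset.mem_image.1 hu
    have hjb : (j : ℕ) < b := by
      rw [hJ] at hj; exact (Finset.mem_filter.1 hj).2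
    -- t0 ∉ t
    have ht0t : t0 ∉ t := by
      intro hmem
      have ht0u : t0 ∉ ofColex (f j) := fun h =>
        (Finset.mem_erase.1 ((Finset.mem_powersetCard.1 (hmemP j)).1 h)).1 rfl
      obtain ⟨_, hforall⟩ := Finset.Colex.toColex_lt_toColex.1 hlt
      obtain ⟨y, hy1, _, hy3⟩ := hforall hmem ht0u
      have : y = t0 := le_antisymm (ht0 y) hy3
      exact ht0u (this ▸ hy1)
    have htP : t ∈ P := by
      rw [hP, Finset.mem_powersetCard]
      refine ⟨fun x hx => ?_, htr⟩
      rw [hs, Finset.mem_erase]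
      exact ⟨fun h => ht0t (h ▸ hx), Finset.mem_univ _⟩
    have htPC : toColex t ∈ PC := (hmem_iff _).2 htP
    have : toColex t ∈ Set.range f := by
      rw [Finset.range_orderEmbOfFin]; exact_mod_cast htPC
    obtain ⟨j', hj'⟩ := this
    have hjj' : j' < j := by
      have : f j' < f j := by
        rw [hj']
        have : toColex (ofColex (f j)) = f j := by simp
        rw [← this]; exact hlt
      exact f.lt_iff_lt.1 this
    have : ofColex (f j') = t := by rw [hj']; rfl
    rw [← this]
    apply Finset.mem_image_of_mem
    rw [hJ, Finset.mem_filter]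
    have hjj'' : (j' : ℕ) < (j : ℕ) := hjj'
    exact ⟨mem_univ _, by omega⟩

theorem stmt_12 (n k : ℕ) (hn : 2 * k ≤ n) (c : ℝ) (hc : 1 ≤ c)
    (A B : Finset (Finset (Fin n)))
    (hA : ∀ a ∈ A, a.card = k) (hB : ∀ b ∈ B, b.card = k)
    (hBA : B.card ≤ A.card)
    (hcross : ∀ a ∈ A, ∀ b ∈ B, (a ∩ b).Nonempty) :
    (A.card : ℝ) + c * B.card ≤
      max (n.choose k : ℝ) ((c + 1) * (n - 1).choose (k - 1)) := by
  have hAN : #A ≤ n.choose k := by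
    have hsub : A ⊆ Finset.powersetCard k univ := fun a ha =>
      Finset.mem_powersetCard.2 ⟨Finset.subset_univ _, hA a ha⟩
    calc #A ≤ #(Finset.powersetCard k (univ : Finset (Fin n))) := Finset.card_le_card hsub
      _ = n.choose k := by rw [Finset.card_powersetCard, card_univ, Fintype.card_fin]
  rcases Finset.eq_empty_or_nonempty B with hBe | hBne
  · subst hBe
    refine le_trans ?_ (le_max_left _ _)
    simp only [Finset.card_empty, Nat.cast_zero, mul_zero, add_zero]
    exact_mod_cast hAN
  -- B nonempty
  obtain ⟨b0, hb0⟩ := hBne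
  have hBpos : 0 < #B := Finset.card_pos.2 ⟨b0, hb0⟩
  have hApos : 0 < #A := lt_of_lt_of_le hBpos hBA
  obtain ⟨a0, ha0⟩ := Finset.card_pos.1 hApos
  have hk1 : 1 ≤ k := by
    by_contra h
    have hk0 : k = 0 := by omega
    have : a0 = ∅ := Finset.card_eq_zero.1 (by rw [hA a0 ha0, hk0])
    obtain ⟨x, hx⟩ := hcross a0 ha0 b0 hb0
    rw [this] at hx
    simp at hx
  have hn2 : 2 ≤ n := by omega
  set i := n - 2 * k with hi
  have hB' : (B : Set (Finset (Fin n))).Sized k := fun x hx => hB x hx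
  have hBsized : ((Bᶜˢ : Finset (Finset (Fin n))) : Set (Finset (Fin n))).Sized (n - k) := by
    simpa using hB'.compls
  have hdisj : Disjoint A (∂^[i] Bᶜˢ) := Finset.disjoint_left.2 fun a haA haS => by
    simp only [Finset.mem_shadow_iterate_iff_exists_sdiff, Finset.mem_compls] at haS
    obtain ⟨C, hC, haC, _⟩ := haS
    obtain ⟨x, hx⟩ := hcross a haA Cᶜ hC
    simp only [Finset.mem_inter] at hx
    have h1 : x ∈ C := haC hx.1
    have h2 := hx.2
    rw [Finset.mem_compl] at h2
    exact h2 h1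
  have hDsized : ((∂^[i] Bᶜˢ : Finset (Finset (Fin n))) : Set (Finset (Fin n))).Sized k := by
    have := hBsized.shadow_iterate (k := i)
    convert this using 2
    omega
  have hsum : #A + #(∂^[i] Bᶜˢ) ≤ n.choose k := by
    rw [← Finset.card_union_of_disjoint hdisj]
    have hsub : A ∪ ∂^[i] Bᶜˢ ⊆ Finset.powersetCard k univ := fun t ht => by
      rcases Finset.mem_union.1 ht with h | h
      · exact Finset.mem_powersetCard.2 ⟨Finset.subset_univ _, hA t h⟩
      · exact Finset.mem_powersetCard.2 ⟨Finset.subset_univ _, hDsized h⟩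
    calc #(A ∪ ∂^[i] Bᶜˢ) ≤ #(Finset.powersetCard k (univ : Finset (Fin n))) :=
          Finset.card_le_card hsub
      _ = n.choose k := by rw [Finset.card_powersetCard, card_univ, Fintype.card_fin]
  have hSsymm : (n - 1).choose (n - k) = (n - 1).choose (k - 1) := by
    have := Nat.choose_symm (show n - k ≤ n - 1 by omega) (n := n - 1)
    rw [show n - 1 - (n - k) = k - 1 by omega] at this
    exact this.symm
  have hN : n.choose k = (n - 1).choose (k - 1) + (n - 1).choose k := by
    have := Nat.choose_succ_succ (n - 1) (k - 1)
    rw [show (n - 1).succ = n by omega, show (k - 1).succ = k by omega] at this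
    exact this
  -- step: #B ≤ (n-1).choose (k-1)
  have hbS : #B ≤ (n - 1).choose (k - 1) := by
    by_contra h
    push_neg at h
    have hcard : (n - 1).choose (n - k) ≤ #(Bᶜˢ) := by
      rw [Finset.card_compls, hSsymm]; omega
    have kk := Finset.kruskal_katona_lovasz_form (i := i) (r := n - k) (k := n - 1) (n := n)
      (by omega) (by omega) (by omega) hBsized hcard
    rw [show n - k - i = k by omega] at kk
    have kk' : (n - 1).choose k ≤ #(∂^[i] Bᶜˢ) := by
      refine le_trans kk (le_of_eq ?_)
      congr!
    omega
  -- initial segment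
  set t0 : Fin n := ⟨n - 1, by omega⟩ with ht0
  have ht0max : ∀ x : Fin n, x ≤ t0 := fun x => by
    rw [Fin.le_def]
    have := x.isLt
    simp only [ht0]
    omega
  have hserase : #((univ : Finset (Fin n)).erase t0) = n - 1 := by
    rw [Finset.card_erase_of_mem (Finset.mem_univ _), card_univ, Fintype.card_fin]
  obtain ⟨𝒞, h𝒞card, h𝒞init, h𝒞sub⟩ := exists_initSeg_aux (r := n - k) (b := #B) t0 ht0max
    (by rw [hserase, hSsymm]; exact hbS)
  have kk2 : #(∂^[i] 𝒞) ≤ #(∂^[i] Bᶜˢ) := by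
    have h := Finset.iterated_kk (k := i) hBsized (by rw [Finset.card_compls, h𝒞card]) h𝒞init
    refine le_trans (le_of_eq ?_) (le_trans h (le_of_eq ?_)) <;> congr!
  have lym := ground_iter_lym (s := (univ : Finset (Fin n)).erase t0) (r := n - k)
    (by rw [hserase]; omega) i (by omega) 𝒞 h𝒞sub h𝒞init.1
  rw [hserase, h𝒞card, show n - k - i = k by omega, hSsymm] at lym
  have f2n : #B * (n - 1).choose k ≤ #(∂^[i] Bᶜˢ) * (n - 1).choose (k - 1) :=
    le_trans lym (Nat.mul_le_mul_right _ kk2)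
  -- real arithmetic
  have hSpos : 0 < (n - 1).choose (k - 1) := Nat.choose_pos (by omega)
  have f1 : (#A : ℝ) + (#(∂^[i] Bᶜˢ) : ℝ) ≤ (n.choose k : ℝ) := by exact_mod_cast hsum
  have f2 : (#B : ℝ) * ((n - 1).choose k : ℝ) ≤ (#(∂^[i] Bᶜˢ) : ℝ) * ((n - 1).choose (k - 1) : ℝ) := by
    exact_mod_cast f2n
  have f3 : (#B : ℝ) ≤ ((n - 1).choose (k - 1) : ℝ) := by exact_mod_cast hbS
  have f4 : (n.choose k : ℝ) = ((n - 1).choose (k - 1) : ℝ) + ((n - 1).choose k : ℝ) := by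
    exact_mod_cast hN
  have f5 : (1 : ℝ) ≤ ((n - 1).choose (k - 1) : ℝ) := by exact_mod_cast hSpos
  rcases le_or_gt (c * ((n - 1).choose (k - 1) : ℝ)) ((n - 1).choose k : ℝ) with hcs | hcs
  · refine le_trans ?_ (le_max_left _ _)
    have hcb : c * (#B : ℝ) ≤ (#(∂^[i] Bᶜˢ) : ℝ) := by
      have hBnn : (0 : ℝ) ≤ (#B : ℝ) := Nat.cast_nonneg _
      have h1 : c * (#B : ℝ) * ((n - 1).choose (k - 1) : ℝ) ≤
          (#(∂^[i] Bᶜˢ) : ℝ) * ((n - 1).choose (k - 1) : ℝ) := by nlinarith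
      exact le_of_mul_le_mul_right h1 (by linarith)
    linarith
  · refine le_trans ?_ (le_max_right _ _)
    have key : c * (#B : ℝ) * ((n - 1).choose (k - 1) : ℝ) +
        ((n - 1).choose k : ℝ) * ((n - 1).choose (k - 1) : ℝ) ≤
        c * ((n - 1).choose (k - 1) : ℝ) * ((n - 1).choose (k - 1) : ℝ) +
        (#(∂^[i] Bᶜˢ) : ℝ) * ((n - 1).choose (k - 1) : ℝ) := by
      nlinarith [mul_nonneg (sub_nonneg.2 f3) (le_of_lt (sub_pos.2 hcs)), f2]
    have key2 : c * (#B : ℝ) + ((n - 1).choose k : ℝ) ≤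
        c * ((n - 1).choose (k - 1) : ℝ) + (#(∂^[i] Bᶜˢ) : ℝ) := by
      have hSpos' : (0 : ℝ) < ((n - 1).choose (k - 1) : ℝ) := by linarith
      have h1 : (c * (#B : ℝ) + ((n - 1).choose k : ℝ)) * ((n - 1).choose (k - 1) : ℝ) ≤
          (c * ((n - 1).choose (k - 1) : ℝ) + (#(∂^[i] Bᶜˢ) : ℝ)) * ((n - 1).choose (k - 1) : ℝ) := by
        ring_nf; ring_nf at key; linarith
      exact le_of_mul_le_mul_right h1 hSpos'
    linarith
end

section
/- Let a + b ≤ n, and let A be an a-element and B a b-element subset of [n]. Then the initial segments L(A,a) and L(B,b) of the lexicographic order are cross-intersecting if and only if A and B intersect strongly, i.e. there is j with A ∩ B ∩ [j] = {j} and A ∪ B ⊇ [j]. -/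
/-- the lexicographic (colex-style) order of the paper: `A < B` iff `B ⊆ A` or the
minimal element of `A \ B` is smaller than the minimal element of `B \ A`.
(Note `A < A` holds.) -/
def lexLe (A B : Finset ℕ) : Prop :=
  B ⊆ A ∨ (A \ B).min < (B \ A).min

/-- `L n t S` : the `t`-element subsets of `[n] = {1,…,n}` preceding `S`. -/
def L (n t : ℕ) (S : Finset ℕ) : Set (Finset ℕ) :=
  {T | T ⊆ Finset.Icc 1 n ∧ T.card = t ∧ lexLe T S}

/-- `S` and `T` intersect strongly. -/
def StrongInt (S T : Finset ℕ) : Prop :=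
  ∃ j : ℕ, 1 ≤ j ∧ S ∩ T ∩ Finset.Icc 1 j = {j} ∧ Finset.Icc 1 j ⊆ S ∪ T

lemma key_lemma (X Y : Finset ℕ) (i : ℕ) (hlex : lexLe X Y)
    (hagree : ∀ x, x < i → (x ∈ X ↔ x ∈ Y)) (hi : i ∈ Y) : i ∈ X := by
  rcases hlex with h | h
  · exact h hi
  · by_contra hiX
    have h1 : (Y \ X).min ≤ (i : WithTop ℕ) :=
      Finset.min_le (by simp [Finset.mem_sdiff, hiX, hi])
    have h2 : (X \ Y).min < (i : WithTop ℕ) := lt_of_lt_of_le h h1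
    rcases (X \ Y).eq_empty_or_nonempty with he | hne
    · simp [he] at h2
    · obtain ⟨x, hx⟩ := Finset.min_of_nonempty hne
      have hxm : x ∈ X \ Y := Finset.mem_of_min hx
      rw [hx] at h2
      have hxi : x < i := WithTop.coe_lt_coe.1 h2
      rw [Finset.mem_sdiff] at hxm
      exact hxm.2 ((hagree x hxi).1 hxm.1)

theorem stmt_13 (n a b : ℕ) (hab : a + b ≤ n)
    (A B : Finset ℕ) (hA : A ⊆ Finset.Icc 1 n) (hB : B ⊆ Finset.Icc 1 n)
    (hAa : A.card = a) (hBb : B.card = b) :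
    (∀ S ∈ L n a A, ∀ T ∈ L n b B, (S ∩ T).Nonempty) ↔ StrongInt A B := by
  have hAL : A ∈ L n a A := ⟨hA, hAa, Or.inl (subset_refl A)⟩
  have hBL : B ∈ L n b B := ⟨hB, hBb, Or.inl (subset_refl B)⟩
  constructor
  · intro hcross
    by_contra hns
    rcases (A ∩ B).eq_empty_or_nonempty with hAB | hAB
    · have := hcross A hAL B hBL
      rw [hAB] at this
      exact absurd this (by simp)
    · set c := (A ∩ B).min' hAB with hc
      have hcAB : c ∈ A ∩ B := Finset.min'_mem _ _
      have hcIcc : c ∈ Finset.Icc 1 n := hA (Finset.mem_inter.1 hcAB).1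
      have hc1 : 1 ≤ c := (Finset.mem_Icc.1 hcIcc).1
      have hcn : c ≤ n := (Finset.mem_Icc.1 hcIcc).2
      have hint : A ∩ B ∩ Finset.Icc 1 c = {c} := by
        apply Finset.Subset.antisymm
        · intro x hx
          rw [Finset.mem_inter, Finset.mem_Icc] at hx
          have : c ≤ x := Finset.min'_le _ _ hx.1
          simp [le_antisymm hx.2.2 this]
        · intro x hx
          rw [Finset.mem_singleton] at hx
          subst hx
          exact Finset.mem_inter.2 ⟨hcAB, Finset.mem_Icc.2 ⟨hc1, le_refl _⟩⟩
      have hnsub : ¬ (Finset.Icc 1 c ⊆ A ∪ B) := fun h => hns ⟨c, hc1, hint, h⟩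
      -- choose the minimal gap m
      have hMne : ((Finset.Icc 1 c).filter (fun x => x ∉ A ∪ B)).Nonempty := by
        rw [Finset.filter_nonempty_iff]
        rw [Finset.not_subset] at hnsub
        obtain ⟨x, hx1, hx2⟩ := hnsub
        exact ⟨x, hx1, hx2⟩
      set m := ((Finset.Icc 1 c).filter (fun x => x ∉ A ∪ B)).min' hMne with hmdef
      have hmIcc : m ∈ Finset.Icc 1 c := by
        have h := Finset.min'_mem _ hMne
        rw [Finset.mem_filter] at h
        exact h.1
      have hmAB : m ∉ A ∪ B := by
        have h := Finset.min'_mem _ hMne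
        rw [Finset.mem_filter] at h
        exact h.2
      have hm1 : 1 ≤ m := (Finset.mem_Icc.1 hmIcc).1
      have hmc : m ≤ c := (Finset.mem_Icc.1 hmIcc).2
      have hmlt : m < c := by
        rcases lt_or_eq_of_le hmc with h | h
        · exact h
        · exfalso
          apply hmAB
          rw [h]
          exact Finset.mem_union_left _ (Finset.mem_inter.1 hcAB).1
      have hmin : ∀ x, 1 ≤ x → x ≤ m - 1 → x ∈ A ∪ B := by
        intro x hx1 hxm
        by_contra hx
        have : m ≤ x := Finset.min'_le _ _ (by
          rw [Finset.mem_filter, Finset.mem_Icc]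
          exact ⟨⟨hx1, le_trans (le_trans hxm (Nat.sub_le m 1)) hmc⟩, hx⟩)
        omega
      set A₁ := A ∩ Finset.Icc 1 (m - 1) with hA₁
      set B₁ := B ∩ Finset.Icc 1 (m - 1) with hB₁
      have hBeq : (B ∩ Finset.Icc 1 (m - 1)).card = B₁.card := rfl
      have hdisj₁ : Disjoint A₁ B₁ := by
        rw [Finset.disjoint_left]
        intro x hxA hxB
        rw [hA₁, Finset.mem_inter, Finset.mem_Icc] at hxA
        rw [hB₁, Finset.mem_inter] at hxB
        have : c ≤ x := Finset.min'_le _ _ (Finset.mem_inter.2 ⟨hxA.1, hxB.1⟩)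
        omega
      have hunion₁ : A₁ ∪ B₁ = Finset.Icc 1 (m - 1) := by
        apply Finset.Subset.antisymm
        · intro x hx
          rcases Finset.mem_union.1 hx with h | h
          · exact (Finset.mem_inter.1 h).2
          · exact (Finset.mem_inter.1 h).2
        · intro x hx
          rw [Finset.mem_Icc] at hx
          rcases Finset.mem_union.1 (hmin x hx.1 hx.2) with h | h
          · exact Finset.mem_union_left _ (Finset.mem_inter.2 ⟨h, Finset.mem_Icc.2 hx⟩)
          · exact Finset.mem_union_right _ (Finset.mem_inter.2 ⟨h, Finset.mem_Icc.2 hx⟩)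
      have hcard₁ : A₁.card + B₁.card = m - 1 := by
        rw [← Finset.card_union_of_disjoint hdisj₁, hunion₁, Nat.card_Icc]
        omega
      have hA₁lt : A₁.card < a := by
        rw [← hAa]
        apply Finset.card_lt_card
        constructor
        · exact Finset.inter_subset_left
        · intro hsub
          have := hsub (Finset.mem_inter.1 hcAB).1
          rw [hA₁, Finset.mem_inter, Finset.mem_Icc] at this
          omega
      -- the pool
      set P := Finset.Icc (m + 1) n \ B with hP
      have hBsplit : (B ∩ Finset.Icc 1 (m-1)).card + (B ∩ Finset.Icc (m+1) n).card = b := by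
        rw [← hBb, ← Finset.card_union_of_disjoint (by
          rw [Finset.disjoint_left]
          intro x hx hy
          rw [Finset.mem_inter, Finset.mem_Icc] at hx hy
          omega)]
        congr 1
        apply Finset.Subset.antisymm
        · intro x hx
          rcases Finset.mem_union.1 hx with h | h
          · exact (Finset.mem_inter.1 h).1
          · exact (Finset.mem_inter.1 h).1
        · intro x hx
          have hxI := hB hx
          rw [Finset.mem_Icc] at hxI
          have hxm : x ≠ m := by rintro rfl; exact hmAB (Finset.mem_union_right _ hx)
          rcases lt_or_ge x m with h | h
          · exact Finset.mem_union_left _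
              (Finset.mem_inter.2 ⟨hx, Finset.mem_Icc.2 ⟨hxI.1, by omega⟩⟩)
          · exact Finset.mem_union_right _
              (Finset.mem_inter.2 ⟨hx, Finset.mem_Icc.2 ⟨by omega, hxI.2⟩⟩)
      have hPcard : P.card + (B ∩ Finset.Icc (m+1) n).card = n - m := by
        rw [hP]
        have heq : Finset.Icc (m+1) n \ B = Finset.Icc (m+1) n \ (B ∩ Finset.Icc (m+1) n) := by
          ext x
          simp only [Finset.mem_sdiff, Finset.mem_inter]
          tauto
        rw [heq, Finset.card_sdiff_add_card_eq_card Finset.inter_subset_right, Nat.card_Icc]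
        omega
      have hBi : (B ∩ Finset.Icc (m+1) n).card ≤ n - m := by
        calc (B ∩ Finset.Icc (m+1) n).card ≤ (Finset.Icc (m+1) n).card :=
              Finset.card_le_card Finset.inter_subset_right
          _ = n - m := by rw [Nat.card_Icc]; omega
      have hkP : a - 1 - A₁.card ≤ P.card := by omega
      obtain ⟨X, hXP, hXcard⟩ := Finset.exists_subset_card_eq hkP
      have hXub : ∀ x ∈ X, m + 1 ≤ x ∧ x ≤ n := by
        intro x hx
        have := hXP hx
        rw [hP, Finset.mem_sdiff, Finset.mem_Icc] at this
        exact this.1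
      have hXB : ∀ x ∈ X, x ∉ B := by
        intro x hx
        have := hXP hx
        rw [hP, Finset.mem_sdiff] at this
        exact this.2
      set S := insert m (A₁ ∪ X) with hS
      clear_value S P B₁ A₁ m c
      have hmnotin : m ∉ A₁ ∪ X := by
        rw [Finset.mem_union]
        rintro (h | h)
        · rw [hA₁, Finset.mem_inter, Finset.mem_Icc] at h; omega
        · have := (hXub m h).1; omega
      have hdisjAX : Disjoint A₁ X := by
        rw [Finset.disjoint_left]
        intro x hx hy
        rw [hA₁, Finset.mem_inter, Finset.mem_Icc] at hx
        have := (hXub x hy).1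
        omega
      have hScard : S.card = a := by
        rw [hS, Finset.card_insert_of_notMem hmnotin, Finset.card_union_of_disjoint hdisjAX, hXcard]
        omega
      have hSsub : S ⊆ Finset.Icc 1 n := by
        intro x hx
        rw [hS, Finset.mem_insert, Finset.mem_union] at hx
        rcases hx with rfl | h | h
        · rw [Finset.mem_Icc]; omega
        · rw [hA₁] at h
          exact hA (Finset.mem_inter.1 h).1
        · rw [Finset.mem_Icc]; have := hXub x h; omega
      -- membership characterization helpers
      have hmemS : ∀ x, x ∈ S ↔ x = m ∨ x ∈ A₁ ∨ x ∈ X := by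
        intro x; rw [hS]; simp [Finset.mem_insert, Finset.mem_union]
      have hSlex : lexLe S A := by
        right
        have hmSA : m ∈ S \ A := by
          rw [Finset.mem_sdiff, hmemS]
          exact ⟨Or.inl rfl, fun h => hmAB (Finset.mem_union_left _ h)⟩
        have hminSA : (S \ A).min = (m : WithTop ℕ) := by
          apply le_antisymm (Finset.min_le hmSA)
          apply Finset.le_min
          intro x hx
          rw [Finset.mem_sdiff, hmemS] at hx
          rcases hx.1 with rfl | h | h
          · exact le_refl _
          · rw [hA₁] at h
            exact absurd (Finset.mem_inter.1 h).1 hx.2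
          · exact WithTop.coe_le_coe.2 (by have := (hXub x h).1; omega)
        rw [hminSA]
        rcases (A \ S).eq_empty_or_nonempty with he | hne
        · rw [he]; simp
        · obtain ⟨y, hy⟩ := Finset.min_of_nonempty hne
          rw [hy]
          have hym : y ∈ A \ S := Finset.mem_of_min hy
          rw [Finset.mem_sdiff, hmemS] at hym
          push_neg at hym
          obtain ⟨hyA, hym', hyA₁, hyX⟩ := hym
          have : ¬ (y ≤ m - 1) := by
            intro h
            apply hyA₁
            rw [hA₁, Finset.mem_inter, Finset.mem_Icc]
            have := hA hyA; rw [Finset.mem_Icc] at this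
            exact ⟨hyA, this.1, h⟩
          have hmy : m < y := by
            rcases Nat.lt_or_ge m y with hlt | hge
            · exact hlt
            · exact absurd (Nat.le_sub_one_of_lt (lt_of_le_of_ne hge hym')) this
          exact WithTop.coe_lt_coe.2 hmy
      have hSB : S ∩ B = ∅ := by
        rw [Finset.eq_empty_iff_forall_notMem]
        intro x hx
        rw [Finset.mem_inter, hmemS] at hx
        obtain ⟨h1, h2⟩ := hx
        rcases h1 with rfl | h | h
        · exact hmAB (Finset.mem_union_right _ h2)
        · have hxB₁ : x ∈ B₁ := by
            rw [hB₁]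
            rw [hA₁] at h
            exact Finset.mem_inter.2 ⟨h2, (Finset.mem_inter.1 h).2⟩
          exact Finset.disjoint_left.1 hdisj₁ h hxB₁
        · exact hXB x h h2
      have := hcross S ⟨hSsub, hScard, hSlex⟩ B hBL
      rw [hSB] at this
      exact absurd this (by simp)
  · rintro ⟨j, hj1, hjint, hjsub⟩ S hS T hT
    obtain ⟨hSsub, hScard, hSlex⟩ := hS
    obtain ⟨hTsub, hTcard, hTlex⟩ := hT
    have hjA : j ∈ A ∧ j ∈ B := by
      have : j ∈ A ∩ B ∩ Finset.Icc 1 j := by rw [hjint]; exact Finset.mem_singleton_self j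
      rw [Finset.mem_inter, Finset.mem_inter] at this
      exact ⟨this.1.1, this.1.2⟩
    have hcover : ∀ i, 1 ≤ i → i ≤ j → i ∈ A ∪ B := fun i h1 h2 =>
      hjsub (Finset.mem_Icc.2 ⟨h1, h2⟩)
    have hnotboth : ∀ i, i < j → ¬(i ∈ A ∧ i ∈ B) := by
      intro i hij ⟨hiA, hiB⟩
      have h1 : 1 ≤ i := by
        have := hA hiA; rw [Finset.mem_Icc] at this; exact this.1
      have : i ∈ A ∩ B ∩ Finset.Icc 1 j :=
        Finset.mem_inter.2 ⟨Finset.mem_inter.2 ⟨hiA, hiB⟩, Finset.mem_Icc.2 ⟨h1, le_of_lt hij⟩⟩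
      rw [hjint, Finset.mem_singleton] at this
      omega
    by_contra hne
    rw [Finset.not_nonempty_iff_eq_empty] at hne
    have hdisj : ∀ x, x ∈ S → x ∈ T → False := by
      intro x h1 h2
      have : x ∈ S ∩ T := Finset.mem_inter.2 ⟨h1, h2⟩
      rw [hne] at this
      exact absurd this (Finset.notMem_empty x)
    have hzero : ∀ (C : Finset ℕ), C ⊆ Finset.Icc 1 n → 0 ∉ C := by
      intro C hC h
      have := hC h; rw [Finset.mem_Icc] at this; omega
    have Q : ∀ i, 1 ≤ i → i ≤ j → ((i ∈ S ↔ i ∈ A) ∧ (i ∈ T ↔ i ∈ B)) := by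
      intro i
      induction i using Nat.strong_induction_on with
      | _ i ih =>
        intro h1 hij
        have agS : ∀ x, x < i → (x ∈ S ↔ x ∈ A) := by
          intro x hx
          rcases Nat.eq_zero_or_pos x with rfl | hx1
          · simp [hzero S hSsub, hzero A hA]
          · exact (ih x hx hx1 (by omega)).1
        have agT : ∀ x, x < i → (x ∈ T ↔ x ∈ B) := by
          intro x hx
          rcases Nat.eq_zero_or_pos x with rfl | hx1
          · simp [hzero T hTsub, hzero B hB]
          · exact (ih x hx hx1 (by omega)).2
        have fwdS : i ∈ A → i ∈ S := fun h => key_lemma S A i hSlex agS h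
        have fwdT : i ∈ B → i ∈ T := fun h => key_lemma T B i hTlex agT h
        constructor
        · constructor
          · intro hiS
            by_contra hiA
            rcases Finset.mem_union.1 (hcover i h1 hij) with h | h
            · exact hiA h
            · exact hdisj i hiS (fwdT h)
          · exact fwdS
        · constructor
          · intro hiT
            by_contra hiB
            rcases Finset.mem_union.1 (hcover i h1 hij) with h | h
            · exact hdisj i (fwdS h) hiT
            · exact hiB h
          · exact fwdT
    have agS : ∀ x, x < j → (x ∈ S ↔ x ∈ A) := by
      intro x hx
      rcases Nat.eq_zero_or_pos x with rfl | hx1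
      · simp [hzero S hSsub, hzero A hA]
      · exact (Q x hx1 (by omega)).1
    have agT : ∀ x, x < j → (x ∈ T ↔ x ∈ B) := by
      intro x hx
      rcases Nat.eq_zero_or_pos x with rfl | hx1
      · simp [hzero T hTsub, hzero B hB]
      · exact (Q x hx1 (by omega)).2
    exact hdisj j (key_lemma S A j hSlex agS hjA.1) (key_lemma T B j hTlex agT hjA.2)
end

section
/- Let a, b be positive integers with a + b ≤ n, and let P, Q ⊂ [n] be nonempty with |P| ≤ a, |Q| ≤ b, such that for some j, P ∩ Q = {j} and P ∪ Q = [j]. Then L(P,a) and L(Q,b) form a maximal pair of cross-intersecting families: no proper simultaneous enlargement of both (within ([n] choose a) and ([n] choose b) respectively) remains cross-intersecting. -/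
open Finset

lemma key_lemma_s14 (n a b : ℕ) (hab : a + b ≤ n)
    (P Q : Finset ℕ) (hP : P ⊆ Finset.Icc 1 n) (hQ : Q ⊆ Finset.Icc 1 n)
    (hQb : Q.card ≤ b) (j : ℕ) (hPQ : P ∩ Q = {j}) (hPQU : P ∪ Q = Finset.Icc 1 j)
    (S : Finset ℕ) (hS : S ⊆ Finset.Icc 1 n) (hSa : S.card = a)
    (hnot : ¬ lexLe S P) :
    ∃ T ∈ L n b Q, S ∩ T = ∅ := by
  unfold lexLe at hnot
  push_neg at hnot
  obtain ⟨hnP, hmin⟩ := hnot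
  have hjP : j ∈ P := by
    have : j ∈ P ∩ Q := by rw [hPQ]; exact mem_singleton_self j
    exact (mem_inter.mp this).1
  have hjQ : j ∈ Q := by
    have : j ∈ P ∩ Q := by rw [hPQ]; exact mem_singleton_self j
    exact (mem_inter.mp this).2
  have hne : (P \ S).Nonempty := sdiff_nonempty.mpr hnP
  set i := (P \ S).min' hne with hi_def
  have hiPS : i ∈ P \ S := min'_mem _ hne
  have hiP : i ∈ P := (mem_sdiff.mp hiPS).1
  have hiS : i ∉ S := (mem_sdiff.mp hiPS).2
  have hij : i ≤ j := by
    have : i ∈ P ∪ Q := mem_union_left _ hiP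
    rw [hPQU, mem_Icc] at this; exact this.2
  have hcoe : (P \ S).min = (i : WithTop ℕ) := (coe_min' hne).symm
  have factA : ∀ s ∈ S, s < i → s ∈ P := by
    intro s hs hsi
    by_contra hsP
    have h1 : (S \ P).min ≤ (s : WithTop ℕ) := min_le (mem_sdiff.mpr ⟨hs, hsP⟩)
    have h2 : (i : WithTop ℕ) ≤ (s : WithTop ℕ) := by
      rw [← hcoe]; exact hmin.trans h1
    exact absurd (WithTop.coe_le_coe.mp h2) (not_le.mpr hsi)
  set F := Q.filter (fun q => q < i) with hF_def
  set T₀ := insert i F with hT0_def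
  have hiF : i ∉ F := by simp [hF_def]
  have hdisST₀ : Disjoint S T₀ := by
    rw [disjoint_left]
    intro x hxS hxT
    rw [hT0_def, mem_insert] at hxT
    rcases hxT with rfl | hxF
    · exact hiS hxS
    · rw [hF_def, mem_filter] at hxF
      have hxP : x ∈ P := factA x hxS hxF.2
      have : x ∈ P ∩ Q := mem_inter.mpr ⟨hxP, hxF.1⟩
      rw [hPQ, mem_singleton] at this
      omega
  have hT₀card : T₀.card ≤ b := by
    have h1 : F ⊆ Q.erase j := by
      intro x hx
      rw [hF_def, mem_filter] at hx
      refine mem_erase.mpr ⟨?_, hx.1⟩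
      omega
    have h2 : F.card ≤ Q.card - 1 := by
      have := card_le_card h1
      rwa [card_erase_of_mem hjQ] at this
    have h3 : 1 ≤ Q.card := card_pos.mpr ⟨j, hjQ⟩
    rw [hT0_def, card_insert_of_notMem hiF]
    omega
  have hT₀sub : T₀ ⊆ Finset.Icc 1 n := by
    rw [hT0_def]
    exact insert_subset (hP hiP) ((filter_subset _ _).trans hQ)
  have hlex : ∀ T : Finset ℕ, T₀ ⊆ T → lexLe T Q := by
    intro T hTsub
    by_cases hQT : Q ⊆ T
    · exact Or.inl hQT
    · right
      have hiT : i ∈ T := hTsub (mem_insert_self _ _)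
      have hiQ : i ∉ Q := by
        intro hiQ
        have : i = j := by
          have : i ∈ P ∩ Q := mem_inter.mpr ⟨hiP, hiQ⟩
          rwa [hPQ, mem_singleton] at this
        apply hQT
        intro q hq
        have hqj : q ≤ j := by
          have : q ∈ P ∪ Q := mem_union_right _ hq
          rw [hPQU, mem_Icc] at this; exact this.2
        rcases lt_or_eq_of_le (by omega : q ≤ i) with h | h
        · exact hTsub (mem_insert_of_mem (mem_filter.mpr ⟨hq, h⟩))
        · exact h ▸ hiT
      have hQT' : (Q \ T).Nonempty := sdiff_nonempty.mpr hQT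
      set m := (Q \ T).min' hQT' with hm_def
      have hmQT : m ∈ Q \ T := min'_mem _ hQT'
      have hmQ : m ∈ Q := (mem_sdiff.mp hmQT).1
      have hmT : m ∉ T := (mem_sdiff.mp hmQT).2
      have him : i < m := by
        rcases lt_trichotomy m i with h | h | h
        · exact absurd (hTsub (mem_insert_of_mem (mem_filter.mpr ⟨hmQ, h⟩))) hmT
        · exact absurd (h ▸ hiT) hmT
        · exact h
      calc (T \ Q).min ≤ (i : WithTop ℕ) := min_le (mem_sdiff.mpr ⟨hiT, hiQ⟩)
        _ < (m : WithTop ℕ) := WithTop.coe_lt_coe.mpr him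
        _ = (Q \ T).min := coe_min' hQT'
  -- extension
  have hUsub : S ∪ T₀ ⊆ Finset.Icc 1 n := union_subset hS hT₀sub
  have hUcard : b - T₀.card ≤ ((Finset.Icc 1 n) \ (S ∪ T₀)).card := by
    have h2 : (S ∪ T₀).card = a + T₀.card := by
      rw [card_union_of_disjoint hdisST₀, hSa]
    rw [card_sdiff_of_subset hUsub, h2, Nat.card_Icc]
    omega
  obtain ⟨E, hEsub, hEcard⟩ := Finset.exists_subset_card_eq hUcard
  have hEdis : Disjoint T₀ E := by
    rw [disjoint_right]
    intro x hxE hxT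
    have := hEsub hxE
    rw [mem_sdiff] at this
    exact this.2 (mem_union_right _ hxT)
  have hSEdis : Disjoint S E := by
    rw [disjoint_right]
    intro x hxE hxS
    have := hEsub hxE
    rw [mem_sdiff] at this
    exact this.2 (mem_union_left _ hxS)
  refine ⟨T₀ ∪ E, ⟨?_, ?_, ?_⟩, ?_⟩
  · exact union_subset hT₀sub (hEsub.trans (sdiff_subset))
  · rw [card_union_of_disjoint hEdis, hEcard]
    omega
  · exact hlex _ subset_union_left
  · rw [← disjoint_iff_inter_eq_empty, disjoint_union_right]
    exact ⟨hdisST₀, hSEdis⟩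

theorem stmt_14 (n a b : ℕ) (ha : 1 ≤ a) (hb : 1 ≤ b) (hab : a + b ≤ n)
    (P Q : Finset ℕ) (hP : P ⊆ Finset.Icc 1 n) (hQ : Q ⊆ Finset.Icc 1 n)
    (hPne : P.Nonempty) (hQne : Q.Nonempty)
    (hPa : P.card ≤ a) (hQb : Q.card ≤ b)
    (j : ℕ) (hPQ : P ∩ Q = {j}) (hPQU : P ∪ Q = Finset.Icc 1 j) :
    ∀ A' B' : Set (Finset ℕ),
      (∀ S ∈ A', S ⊆ Finset.Icc 1 n ∧ S.card = a) →
      (∀ T ∈ B', T ⊆ Finset.Icc 1 n ∧ T.card = b) →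
      L n a P ⊆ A' → L n b Q ⊆ B' →
      (∀ S ∈ A', ∀ T ∈ B', (S ∩ T).Nonempty) →
      A' = L n a P ∧ B' = L n b Q := by
  intro A' B' hA hB hLA hLB hcross
  constructor
  · apply Set.Subset.antisymm _ hLA
    intro S hSA
    obtain ⟨hSsub, hScard⟩ := hA S hSA
    by_contra hSL
    have hnot : ¬ lexLe S P := fun h => hSL ⟨hSsub, hScard, h⟩
    obtain ⟨T, hTL, hdis⟩ := key_lemma_s14 n a b hab P Q hP hQ hQb j hPQ hPQU S hSsub hScard hnot
    have := hcross S hSA T (hLB hTL)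
    rw [hdis] at this
    exact absurd this (by simp)
  · apply Set.Subset.antisymm _ hLB
    intro T hTB
    obtain ⟨hTsub, hTcard⟩ := hB T hTB
    by_contra hTL
    have hnot : ¬ lexLe T Q := fun h => hTL ⟨hTsub, hTcard, h⟩
    obtain ⟨S, hSL, hdis⟩ := key_lemma_s14 n b a (by omega) Q P hQ hP hPa j
      (by rw [Finset.inter_comm]; exact hPQ) (by rw [Finset.union_comm]; exact hPQU)
      T hTsub hTcard hnot
    have := hcross S (hLA hSL) T hTB
    rw [Finset.inter_comm, hdis] at this
    exact absurd this (by simp)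
end

section
/- For 2k ≤ n ≤ 3k-1, every intersecting family F ⊂ V(n,k,1) satisfies |F| ≤ k*binom(n-1,k); i.e., m(n,k,1) = k*binom(n-1,k) in this range. -/
open Finset

namespace Stmt17Aux

section Part1

variable {α β : Type*} [Fintype α] [Fintype β] [DecidableEq α] [DecidableEq β]

lemma fiber0_card (v : α → ℤ) (hv : ∀ a, v a = 0 ∨ v a = 1 ∨ v a = -1) :
    (univ.filter fun a => v a = 0).card + ((univ.filter fun a => v a = 1).card
      + (univ.filter fun a => v a = -1).card) = Fintype.card α := by
  classical
  have hdisj1 : Disjoint (univ.filter fun a => v a = 0) ((univ.filter fun a => v a = 1) ∪ (univ.filter fun a => v a = -1)) := by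
    simp only [Finset.disjoint_left, mem_union, mem_filter, mem_univ, true_and]
    rintro a h0 (h1 | hm) <;> omega
  have hdisj2 : Disjoint (univ.filter fun a => v a = 1) (univ.filter fun a => v a = -1) := by
    simp only [Finset.disjoint_left, mem_filter, mem_univ, true_and]
    intro a h1 hm; omega
  rw [← card_union_of_disjoint hdisj2, ← card_union_of_disjoint hdisj1]
  have : ((univ.filter fun a => v a = 0) ∪ ((univ.filter fun a => v a = 1) ∪ (univ.filter fun a => v a = -1))) = univ := by
    ext a
    simp only [mem_union, mem_filter, mem_univ, true_and, iff_true]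
    rcases hv a with h | h | h <;> tauto
  rw [this, card_univ]

section Glue

variable (v : α → ℤ) (w : β → ℤ)
variable (e1 : {a // v a = 1} ≃ {b // w b = 1}) (em : {a // v a = -1} ≃ {b // w b = -1})
  (e0 : {a // v a = 0} ≃ {b // w b = 0})
variable (hv : ∀ a, v a = 0 ∨ v a = 1 ∨ v a = -1) (hw : ∀ b, w b = 0 ∨ w b = 1 ∨ w b = -1)

/-- glue the three fiber equivalences into one equivalence -/
def glue : α ≃ β where
  toFun a := if h1 : v a = 1 then (e1 ⟨a, h1⟩ : β)
    else if hm : v a = -1 then (em ⟨a, hm⟩ : β)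
    else (e0 ⟨a, by rcases hv a with h|h|h <;> simp_all⟩ : β)
  invFun b := if h1 : w b = 1 then (e1.symm ⟨b, h1⟩ : α)
    else if hm : w b = -1 then (em.symm ⟨b, hm⟩ : α)
    else (e0.symm ⟨b, by rcases hw b with h|h|h <;> simp_all⟩ : α)
  left_inv a := by
    by_cases h1 : v a = 1
    · simp only [dif_pos h1]
      have hb : w (e1 ⟨a, h1⟩ : β) = 1 := (e1 ⟨a, h1⟩).prop
      rw [dif_pos hb]
      have : (⟨(e1 ⟨a, h1⟩ : β), hb⟩ : {b // w b = 1}) = e1 ⟨a, h1⟩ := Subtype.ext rfl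
      rw [this, Equiv.symm_apply_apply]
    · by_cases hm : v a = -1
      · simp only [dif_neg h1, dif_pos hm]
        have hb : w (em ⟨a, hm⟩ : β) = -1 := (em ⟨a, hm⟩).prop
        rw [dif_neg (by rw [hb]; norm_num), dif_pos hb]
        have : (⟨(em ⟨a, hm⟩ : β), hb⟩ : {b // w b = -1}) = em ⟨a, hm⟩ := Subtype.ext rfl
        rw [this, Equiv.symm_apply_apply]
      · simp only [dif_neg h1, dif_neg hm]
        have h0 : v a = 0 := by rcases hv a with h|h|h <;> simp_all
        have hb : w (e0 ⟨a, h0⟩ : β) = 0 := (e0 ⟨a, h0⟩).prop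
        rw [dif_neg (by rw [hb]; norm_num), dif_neg (by rw [hb]; norm_num)]
        have : (⟨(e0 ⟨a, h0⟩ : β), hb⟩ : {b // w b = 0}) = e0 ⟨a, h0⟩ := Subtype.ext rfl
        rw [this, Equiv.symm_apply_apply]
  right_inv b := by
    by_cases h1 : w b = 1
    · simp only [dif_pos h1]
      have hb : v (e1.symm ⟨b, h1⟩ : α) = 1 := (e1.symm ⟨b, h1⟩).prop
      rw [dif_pos hb]
      have : (⟨(e1.symm ⟨b, h1⟩ : α), hb⟩ : {a // v a = 1}) = e1.symm ⟨b, h1⟩ := Subtype.ext rfl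
      rw [this, Equiv.apply_symm_apply]
    · by_cases hm : w b = -1
      · simp only [dif_neg h1, dif_pos hm]
        have hb : v (em.symm ⟨b, hm⟩ : α) = -1 := (em.symm ⟨b, hm⟩).prop
        rw [dif_neg (by rw [hb]; norm_num), dif_pos hb]
        have : (⟨(em.symm ⟨b, hm⟩ : α), hb⟩ : {a // v a = -1}) = em.symm ⟨b, hm⟩ := Subtype.ext rfl
        rw [this, Equiv.apply_symm_apply]
      · simp only [dif_neg h1, dif_neg hm]
        have h0 : w b = 0 := by rcases hw b with h|h|h <;> simp_all
        have hb : v (e0.symm ⟨b, h0⟩ : α) = 0 := (e0.symm ⟨b, h0⟩).prop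
        rw [dif_neg (by rw [hb]; norm_num), dif_neg (by rw [hb]; norm_num)]
        have : (⟨(e0.symm ⟨b, h0⟩ : α), hb⟩ : {a // v a = 0}) = e0.symm ⟨b, h0⟩ := Subtype.ext rfl
        rw [this, Equiv.apply_symm_apply]

lemma glue_spec : w ∘ (glue v w e1 em e0 hv hw) = v := by
  funext a
  simp only [Function.comp_apply, glue, Equiv.coe_fn_mk]
  by_cases h1 : v a = 1
  · rw [dif_pos h1, (e1 ⟨a, h1⟩).prop, h1]
  · by_cases hm : v a = -1
    · rw [dif_neg h1, dif_pos hm, (em ⟨a, hm⟩).prop, hm]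
    · have h0 : v a = 0 := by rcases hv a with h|h|h <;> simp_all
      rw [dif_neg h1, dif_neg hm, (e0 ⟨a, h0⟩).prop, h0]

end Glue



section FibEquiv

variable (v : α → ℤ) (w : β → ℤ)
variable (hv : ∀ a, v a = 0 ∨ v a = 1 ∨ v a = -1) (hw : ∀ b, w b = 0 ∨ w b = 1 ∨ w b = -1)

def fibEquiv : {π : α ≃ β // w ∘ π = v} ≃
    (({a // v a = 1} ≃ {b // w b = 1}) × ({a // v a = -1} ≃ {b // w b = -1})
      × ({a // v a = 0} ≃ {b // w b = 0})) where
  toFun := fun ⟨π, h⟩ =>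
    ⟨π.subtypeEquiv (fun a => by rw [← congrFun h a]; rfl),
     π.subtypeEquiv (fun a => by rw [← congrFun h a]; rfl),
     π.subtypeEquiv (fun a => by rw [← congrFun h a]; rfl)⟩
  invFun := fun ⟨e1, em, e0⟩ => ⟨glue v w e1 em e0 hv hw, glue_spec v w e1 em e0 hv hw⟩
  left_inv := fun ⟨π, h⟩ => by
    apply Subtype.ext
    apply Equiv.ext
    intro a
    show (glue v w _ _ _ hv hw) a = π a
    by_cases h1 : v a = 1
    · show dite _ _ _ = _
      rw [dif_pos h1]; rfl
    · by_cases hm : v a = -1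
      · show dite _ _ _ = _
        rw [dif_neg h1, dif_pos hm]; rfl
      · show dite _ _ _ = _
        rw [dif_neg h1, dif_neg hm]; rfl
  right_inv := fun ⟨e1, em, e0⟩ => by
    refine Prod.ext ?_ (Prod.ext ?_ ?_) <;>
    · apply Equiv.ext
      rintro ⟨a, ha⟩
      apply Subtype.ext
      show (glue v w e1 em e0 hv hw) a = _
      show dite _ _ _ = _
      first
      | rw [dif_pos ha]
      | (rw [dif_neg (by rw [ha]; norm_num), dif_pos ha])
      | (rw [dif_neg (by rw [ha]; norm_num), dif_neg (by rw [ha]; norm_num)])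

include hv hw in
lemma card_transporters
    (h1 : (univ.filter fun a => v a = 1).card = (univ.filter fun b => w b = 1).card)
    (hm : (univ.filter fun a => v a = -1).card = (univ.filter fun b => w b = -1).card)
    (h0 : (univ.filter fun a => v a = 0).card = (univ.filter fun b => w b = 0).card) :
    Fintype.card {π : α ≃ β // w ∘ π = v} =
      ((univ.filter fun a => v a = 1).card).factorial *
      (((univ.filter fun a => v a = -1).card).factorial *
       ((univ.filter fun a => v a = 0).card).factorial) := by
  classical
  rw [Fintype.card_congr (fibEquiv v w hv hw), Fintype.card_prod, Fintype.card_prod]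
  have E1 : {a // v a = 1} ≃ {b // w b = 1} :=
    Fintype.equivOfCardEq (by rw [Fintype.card_subtype, Fintype.card_subtype]; exact h1)
  have Em : {a // v a = -1} ≃ {b // w b = -1} :=
    Fintype.equivOfCardEq (by rw [Fintype.card_subtype, Fintype.card_subtype]; exact hm)
  have E0 : {a // v a = 0} ≃ {b // w b = 0} :=
    Fintype.equivOfCardEq (by rw [Fintype.card_subtype, Fintype.card_subtype]; exact h0)
  rw [Fintype.card_equiv E1, Fintype.card_equiv Em, Fintype.card_equiv E0,
    Fintype.card_subtype, Fintype.card_subtype, Fintype.card_subtype]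

end FibEquiv


end Part1

section Part2

lemma filter_card_comp_equiv {α β : Type*} [Fintype α] [Fintype β] [DecidableEq α] [DecidableEq β]
    (e : α ≃ β) (p : β → Prop) [DecidablePred p] :
    (univ.filter fun a => p (e a)).card = (univ.filter p).card := by
  rw [← Fintype.card_subtype, ← Fintype.card_subtype]
  exact Fintype.card_congr (e.subtypeEquiv fun a => Iff.rfl)

variable (n k : ℕ)

def v0 : ZMod n → ℤ := fun j => if j.val < k then 1 else if j.val = n - k then -1 else 0

def pt : ZMod n := ((n - k : ℕ) : ZMod n)

lemma v0_values (j : ZMod n) : v0 n k j = 0 ∨ v0 n k j = 1 ∨ v0 n k j = -1 := by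
  unfold v0; split_ifs <;> simp

variable [NeZero n]

lemma pt_val (hk : 1 ≤ k) (hkn : k ≤ n) : (pt n k).val = n - k :=
  ZMod.val_cast_of_lt (by omega)

lemma v0_eq_one_iff (h2k : 2 * k ≤ n) (j : ZMod n) : v0 n k j = 1 ↔ j.val < k := by
  unfold v0; split_ifs with h1 h2
  · simp [h1]
  · norm_num; omega
  · norm_num; omega

lemma v0_eq_negone_iff (h2k : 2 * k ≤ n) (j : ZMod n) : v0 n k j = -1 ↔ j.val = n - k := by
  unfold v0
  split_ifs with h1 h2
  · norm_num; omega
  · simp [h2]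
  · norm_num; omega

lemma count_lt (hkn : k ≤ n) : (univ.filter fun j : ZMod n => j.val < k).card = k := by
  have himg : (univ.filter fun j : ZMod n => j.val < k) = (range k).image (Nat.cast) := by
    ext j
    simp only [mem_filter, mem_univ, true_and, mem_image, mem_range]
    constructor
    · intro hj; exact ⟨j.val, hj, ZMod.natCast_rightInverse j⟩
    · rintro ⟨m, hm, rfl⟩
      rw [ZMod.val_cast_of_lt (lt_of_lt_of_le hm hkn)]; exact hm
  rw [himg, Finset.card_image_of_injOn, card_range]
  intro a ha b hb hab
  simp only [Finset.coe_range, Set.mem_Iio] at ha hb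
  have := congrArg ZMod.val hab
  rwa [ZMod.val_cast_of_lt (lt_of_lt_of_le ha hkn), ZMod.val_cast_of_lt (lt_of_lt_of_le hb hkn)] at this

lemma count_eq_pt (hk : 1 ≤ k) (hkn : k ≤ n) :
    (univ.filter fun j : ZMod n => j.val = n - k).card = 1 := by
  have : (univ.filter fun j : ZMod n => j.val = n - k) = {pt n k} := by
    ext j
    simp only [mem_filter, mem_univ, true_and, mem_singleton]
    constructor
    · intro hj; apply ZMod.val_injective; rw [hj, pt_val n k hk hkn]
    · rintro rfl; exact pt_val n k hk hkn
  rw [this, card_singleton]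

/-- the key pointwise product formula -/
lemma v0_mul_shift (hk : 1 ≤ k) (h2k : 2 * k ≤ n) (h3k : n + 1 ≤ 3 * k)
    (δ : ZMod n) (hd1 : k ≤ δ.val) (hd2 : δ.val ≤ n - k) (j : ZMod n) :
    v0 n k j * v0 n k (j - δ) =
      (if j = pt n k then (-1 : ℤ) else 0) + (if j = pt n k + δ then (-1 : ℤ) else 0) := by
  have hn0 : 0 < n := Nat.pos_of_ne_zero (NeZero.ne n)
  have ha : j.val < n := ZMod.val_lt j
  have hb : (j - δ).val < n := ZMod.val_lt (j - δ)
  have hdlt : δ.val < n := ZMod.val_lt δ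
  have hsum : ((j - δ).val + δ.val) % n = j.val := by
    have := ZMod.val_add (j - δ) δ
    rw [sub_add_cancel] at this
    omega
  have hcases : (j - δ).val + δ.val = j.val ∨ (j - δ).val + δ.val = j.val + n := by
    rcases lt_or_ge ((j - δ).val + δ.val) n with h | h
    · left; rwa [Nat.mod_eq_of_lt h] at hsum
    · right
      rw [Nat.mod_eq_sub_mod h, Nat.mod_eq_of_lt (by omega)] at hsum
      omega
  have hj_pt : (j = pt n k) ↔ j.val = n - k := by
    constructor
    · rintro rfl; exact pt_val n k hk (by omega)
    · intro h; apply ZMod.val_injective; rw [h, pt_val n k hk (by omega)]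
  have hj_ptd : (j = pt n k + δ) ↔ (j - δ).val = n - k := by
    rw [← sub_eq_iff_eq_add]
    constructor
    · rintro h; rw [h]; exact pt_val n k hk (by omega)
    · intro h; apply ZMod.val_injective; rw [h, pt_val n k hk (by omega)]
  simp only [v0, hj_pt, hj_ptd]
  split_ifs <;> (try norm_num) <;> omega

lemma sum_v0_shift (hk : 1 ≤ k) (h2k : 2 * k ≤ n) (h3k : n + 1 ≤ 3 * k)
    (δ : ZMod n) (hd1 : k ≤ δ.val) (hd2 : δ.val ≤ n - k) :
    ∑ j : ZMod n, v0 n k j * v0 n k (j - δ) = -2 := by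
  rw [Finset.sum_congr rfl (fun j _ => v0_mul_shift n k hk h2k h3k δ hd1 hd2 j),
    Finset.sum_add_distrib, Finset.sum_ite_eq' univ (pt n k) (fun _ => (-1 : ℤ)),
    Finset.sum_ite_eq' univ (pt n k + δ) (fun _ => (-1 : ℤ))]
  simp


end Part2

lemma diff_lemma {n k : ℕ} [NeZero n] (hk : 1 ≤ k) (h2k : 2 * k ≤ n)
    (S : Finset (ZMod n))
    (hS : ∀ s ∈ S, ∀ s' ∈ S, s ≠ s' → ¬(k ≤ (s' - s).val ∧ (s' - s).val ≤ n - k)) :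
    S.card ≤ k := by
  rcases S.eq_empty_or_nonempty with rfl | ⟨d0, hd0⟩
  · simp
  have hvlt : ∀ d : ZMod n, d.val < n := fun d => ZMod.val_lt d
  set A := S.erase d0 with hA
  -- any element of A has (d - d0).val in [1,k-1] ∪ [n-k+1,n-1]
  have hrange : ∀ d ∈ A, ((d - d0).val ≠ 0) ∧ ((d - d0).val < k ∨ n - k < (d - d0).val) := by
    intro d hd
    have hdS := Finset.mem_of_mem_erase hd
    have hne : d0 ≠ d := fun h => (Finset.ne_of_mem_erase hd) h.symm
    constructor
    · intro h0
      have : d - d0 = 0 := by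
        apply ZMod.val_injective; rw [h0, ZMod.val_zero]
      exact (Finset.ne_of_mem_erase hd) (by rwa [sub_eq_zero] at this)
    · have := hS d0 hd0 d hdS hne
      omega
  set small := A.filter (fun d => (d - d0).val < k) with hsmall
  set large := A.filter (fun d => ¬ (d - d0).val < k) with hlarge
  have hsubinj : ∀ x y : ZMod n, x - d0 = y - d0 → x = y := by
    intro x y h
    have := congrArg (· + d0) h
    simpa [sub_add_cancel] using this
  -- images in [1, k-1]
  set P := small.image (fun d => (d - d0).val) with hP
  set Q := large.image (fun d => n - (d - d0).val) with hQ
  have hPcard : P.card = small.card := by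
    apply Finset.card_image_of_injOn
    intro x _ y _ hxy
    exact hsubinj x y (ZMod.val_injective n hxy)
  have hQcard : Q.card = large.card := by
    apply Finset.card_image_of_injOn
    intro x hx y hy hxy
    simp only [Finset.mem_coe] at hx hy
    simp only [hlarge, mem_filter] at hx hy
    have hxy' : n - (x - d0).val = n - (y - d0).val := hxy
    have hx2 := (hrange x hx.1).2
    have hy2 := (hrange y hy.1).2
    have : (x - d0).val = (y - d0).val := by
      have hxn := hvlt (x - d0); have hyn := hvlt (y - d0); omega
    exact hsubinj x y (ZMod.val_injective n this)
  have hPsub : P ⊆ Finset.Ico 1 k := by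
    intro p hp
    simp only [hP, mem_image] at hp
    obtain ⟨d, hd, rfl⟩ := hp
    simp only [hsmall, mem_filter] at hd
    have := (hrange d hd.1).1
    simp only [mem_Ico]
    exact ⟨by omega, hd.2⟩
  have hQsub : Q ⊆ Finset.Ico 1 k := by
    intro q hq
    simp only [hQ, mem_image] at hq
    obtain ⟨d, hd, rfl⟩ := hq
    simp only [hlarge, mem_filter] at hd
    have h1 := (hrange d hd.1).2
    have h2 := hvlt (d - d0)
    simp only [mem_Ico]
    omega
  -- key: if p ∈ P then k - p ∉ Q
  have hkey : ∀ p ∈ P, k - p ∉ Q := by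
    intro p hp hq
    simp only [hP, mem_image] at hp
    obtain ⟨d, hd, rfl⟩ := hp
    simp only [hQ, mem_image] at hq
    obtain ⟨d', hd', hq'⟩ := hq
    simp only [hsmall, mem_filter] at hd
    simp only [hlarge, mem_filter] at hd'
    have hdA := hd.1; have hd'A := hd'.1
    have hrd := hrange d hdA
    have hrd' := hrange d' hd'A
    have hvd := hvlt (d - d0); have hvd' := hvlt (d' - d0)
    -- (d - d').val = k
    have hvald : (d' - d0).val = n - k + (d - d0).val := by omega
    have heq : d - d' = (k : ZMod n) := by
      have e1 : d - d0 = (((d - d0).val : ℕ) : ZMod n) := (ZMod.natCast_rightInverse _).symm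
      have e2 : d' - d0 = ((n - k + (d - d0).val : ℕ) : ZMod n) := by
        rw [← hvald]; exact (ZMod.natCast_rightInverse _).symm
      have : d - d' = (d - d0) - (d' - d0) := by ring
      rw [this, e1, e2]
      push_cast
      have hcast : ((n : ℕ) : ZMod n) = 0 := ZMod.natCast_self n
      push_cast [Nat.cast_sub (by omega : k ≤ n)] at *
      rw [hcast]
      ring
    have hdd' : d' ≠ d := by
      intro h; subst h
      exact hd'.2 hd.2
    have := hS d' (Finset.mem_of_mem_erase hd'A) d (Finset.mem_of_mem_erase hdA) hdd'
    apply this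
    rw [heq, ZMod.val_cast_of_lt (by omega : k < n)]
    omega
  -- conclude
  have himg : P.image (fun p => k - p) ⊆ (Finset.Ico 1 k) \ Q := by
    intro x hx
    simp only [mem_image] at hx
    obtain ⟨p, hp, rfl⟩ := hx
    have hpIco := hPsub hp
    simp only [mem_Ico] at hpIco
    simp only [mem_sdiff, mem_Ico]
    exact ⟨⟨by omega, by omega⟩, hkey p hp⟩
  have himgcard : (P.image (fun p => k - p)).card = P.card := by
    apply Finset.card_image_of_injOn
    intro x hx y hy hxy
    simp only [Finset.mem_coe] at hx hy
    have hxy' : k - x = k - y := hxy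
    have hx' := hPsub hx; have hy' := hPsub hy
    simp only [mem_Ico] at hx' hy'
    omega
  have h1 : P.card ≤ ((Finset.Ico 1 k) \ Q).card := by
    rw [← himgcard]; exact Finset.card_le_card himg
  have h2 : ((Finset.Ico 1 k) \ Q).card = (k - 1) - Q.card := by
    rw [Finset.card_sdiff_of_subset hQsub, Nat.card_Ico]
  have hsl : small.card + large.card = A.card := by
    rw [hsmall, hlarge]
    exact Finset.card_filter_add_card_filter_not _
  have hAcard : A.card = S.card - 1 := Finset.card_erase_of_mem hd0
  have hQk : Q.card ≤ k - 1 := le_trans (Finset.card_le_card hQsub) (by rw [Nat.card_Ico])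
  have hScard : 1 ≤ S.card := Finset.card_pos.mpr ⟨d0, hd0⟩
  omega


theorem upper_bound (n k : ℕ) (hk : 1 ≤ k) (hn : 2 * k ≤ n) (hn' : n + 1 ≤ 3 * k)
    (F : Set (Fin n → ℤ)) (hFV : F ⊆ V n k 1)
    (hint : ∀ v ∈ F, ∀ w ∈ F, dot v w ≠ -2) :
    F.ncard ≤ k * (n - 1).choose k := by
  classical
  have hn0 : 0 < n := by omega
  haveI : NeZero n := ⟨by omega⟩
  -- finiteness
  have hVfin : (V n k 1).Finite := by
    have hfin : ({0, 1, -1} : Set ℤ).Finite :=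
      ((Set.finite_singleton (-1 : ℤ)).insert 1).insert 0
    apply Set.Finite.subset (Set.Finite.pi (fun _ : Fin n => hfin))
    intro v hv
    rw [Set.mem_pi]
    intro i _
    rcases hv.1 i with h | h | h <;> simp [h]
  have hFfin : F.Finite := hVfin.subset hFV
  set Fs := hFfin.toFinset with hFsdef
  set uvec : (Fin n ≃ ZMod n) → ZMod n → (Fin n → ℤ) :=
    fun π s => fun i => v0 n k (π i - s) with huvec
  set K := k.factorial * (Nat.factorial 1 * (n - k - 1).factorial) with hK
  -- Step A : per-π bound
  have stepA : ∀ π : Fin n ≃ ZMod n,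
      (univ.filter fun s : ZMod n => uvec π s ∈ Fs).card ≤ k := by
    intro π
    apply diff_lemma hk hn
    intro s hs s' hs' hne hcon
    obtain ⟨hd1, hd2⟩ := hcon
    simp only [mem_filter, mem_univ, true_and, hFsdef, Set.Finite.mem_toFinset] at hs hs'
    refine hint (uvec π s) hs (uvec π s') hs' ?_
    have e1 : dot (uvec π s) (uvec π s')
        = ∑ j : ZMod n, v0 n k (j - s) * v0 n k (j - s') :=
      Equiv.sum_comp π (fun j => v0 n k (j - s) * v0 n k (j - s'))
    have e2 : ∑ j : ZMod n, v0 n k (j - s) * v0 n k (j - s')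
        = ∑ j : ZMod n, v0 n k j * v0 n k (j - (s' - s)) := by
      rw [← Equiv.sum_comp (Equiv.addRight s)
        (fun j => v0 n k (j - s) * v0 n k (j - s'))]
      apply Finset.sum_congr rfl
      intro j _
      simp only [Equiv.coe_addRight]
      rw [add_sub_cancel_right]
      congr 2
      ring
    rw [e1, e2]
    exact sum_v0_shift n k hk hn hn' (s' - s) hd1 hd2
  -- Step B : fiber count
  have stepB : ∀ vv ∈ Fs, ∀ s : ZMod n,
      (univ.filter fun π : Fin n ≃ ZMod n => uvec π s = vv).card = K := by
    intro vv hvv s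
    have hvV : vv ∈ V n k 1 := hFV (by rwa [hFsdef, Set.Finite.mem_toFinset] at hvv)
    obtain ⟨hval, hc1, hcm⟩ := hvV
    set w : ZMod n → ℤ := fun j => v0 n k (j - s) with hw
    have hw_vals : ∀ j, w j = 0 ∨ w j = 1 ∨ w j = -1 := fun j => v0_values n k _
    have hw1 : (univ.filter fun j => w j = 1).card = k := by
      have := filter_card_comp_equiv (Equiv.subRight s) (fun y => v0 n k y = 1)
      simp only [Equiv.subRight_apply] at this
      rw [hw, this]
      rw [Finset.filter_congr (fun j _ => by rw [v0_eq_one_iff n k hn j])]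
      exact count_lt n k (by omega)
    have hwm : (univ.filter fun j => w j = -1).card = 1 := by
      have := filter_card_comp_equiv (Equiv.subRight s) (fun y => v0 n k y = -1)
      simp only [Equiv.subRight_apply] at this
      rw [hw, this]
      rw [Finset.filter_congr (fun j _ => by rw [v0_eq_negone_iff n k hn j])]
      exact count_eq_pt n k hk (by omega)
    have hw0 : (univ.filter fun j => w j = 0).card = n - k - 1 := by
      have htot := fiber0_card w hw_vals
      rw [hw1, hwm, ZMod.card] at htot
      omega
    have hv0 : (univ.filter fun i => vv i = 0).card = n - k - 1 := by
      have htot := fiber0_card vv hval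
      rw [hc1, hcm, Fintype.card_fin] at htot
      omega
    have hcomp : (univ.filter fun π : Fin n ≃ ZMod n => uvec π s = vv)
        = (univ.filter fun π : Fin n ≃ ZMod n => w ∘ ⇑π = vv) := by
      apply Finset.filter_congr
      intro π _
      exact Iff.rfl
    rw [hcomp, ← Fintype.card_subtype]
    rw [card_transporters vv w hval hw_vals (by rw [hc1, hw1]) (by rw [hcm, hwm])
      (by rw [hv0, hw0])]
    rw [hc1, hcm, hv0, hK]
  -- Step C : double counting
  set N := ∑ π : Fin n ≃ ZMod n, (univ.filter fun s : ZMod n => uvec π s ∈ Fs).card with hN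
  have hupper : N ≤ n.factorial * k := by
    calc N ≤ ∑ _π : Fin n ≃ ZMod n, k := Finset.sum_le_sum (fun π _ => stepA π)
    _ = (Fintype.card (Fin n ≃ ZMod n)) * k := by rw [Finset.sum_const, card_univ, smul_eq_mul]
    _ = n.factorial * k := by
        rw [Fintype.card_equiv (Fintype.equivOfCardEq (by simp [ZMod.card]))]
        rw [Fintype.card_fin]
  have hlower : N = Fs.card * (n * K) := by
    have h1 : N = ∑ s : ZMod n, ∑ π : Fin n ≃ ZMod n, (if uvec π s ∈ Fs then 1 else 0) := by
      rw [hN, Finset.sum_congr rfl (fun π _ => Finset.card_filter _ _)]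
      exact Finset.sum_comm
    have h2 : ∀ s : ZMod n, (∑ π : Fin n ≃ ZMod n, if uvec π s ∈ Fs then 1 else 0)
        = Fs.card * K := by
      intro s
      rw [← Finset.card_filter]
      rw [Finset.card_eq_sum_card_fiberwise
        (f := fun π => uvec π s) (s := univ.filter fun π => uvec π s ∈ Fs) (t := Fs) (fun π hπ => (mem_filter.mp hπ).2)]
      have hfib : ∀ vv ∈ Fs, ((univ.filter fun π : Fin n ≃ ZMod n => uvec π s ∈ Fs).filter
          (fun π => uvec π s = vv)).card = K := by
        intro vv hvv
        have heq : ((univ.filter fun π : Fin n ≃ ZMod n => uvec π s ∈ Fs).filter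
            (fun π => uvec π s = vv)) = univ.filter (fun π => uvec π s = vv) := by
          rw [Finset.filter_filter]
          apply Finset.filter_congr
          intro π _
          constructor
          · rintro ⟨_, h⟩; exact h
          · intro h; exact ⟨by rw [h]; exact hvv, h⟩
        rw [heq]
        exact stepB vv hvv s
      rw [Finset.sum_congr rfl hfib, Finset.sum_const, smul_eq_mul]
    rw [h1, Finset.sum_congr rfl (fun s _ => h2 s), Finset.sum_const, card_univ, ZMod.card,
      smul_eq_mul]
    ring
  have key : Fs.card * (n * K) ≤ n.factorial * k := hlower ▸ hupper
  have hfact : (n - 1).choose k * (k.factorial * (n - k - 1).factorial) = (n - 1).factorial := by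
    have h := Nat.choose_mul_factorial_mul_factorial (show k ≤ n - 1 by omega)
    rw [show n - 1 - k = n - k - 1 by omega] at h
    rw [← h]; ring
  have hnfact : n.factorial = n * (n - 1).factorial := (Nat.mul_factorial_pred (by omega)).symm
  have key2 : Fs.card * (n * K) ≤ (k * (n - 1).choose k) * (n * K) := by
    calc Fs.card * (n * K) ≤ n.factorial * k := key
    _ = (k * (n - 1).choose k) * (n * K) := by
        rw [hnfact, ← hfact, hK, Nat.factorial_one]
        ring
  have hpos : 0 < n * K := by
    rw [hK]
    have := Nat.factorial_pos k
    have := Nat.factorial_pos (n - k - 1)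
    have := Nat.factorial_pos 1
    positivity
  have hfin : Fs.card ≤ k * (n - 1).choose k := Nat.le_of_mul_le_mul_right key2 hpos
  rwa [Set.ncard_eq_toFinset_card F hFfin]


theorem lower_bound (n k : ℕ) (hk : 1 ≤ k) (hn : 2 * k ≤ n) :
    ∃ F : Set (Fin n → ℤ), F ⊆ V n k 1 ∧ (∀ v ∈ F, ∀ w ∈ F, dot v w ≠ -2) ∧
      F.ncard = k * (n - 1).choose k := by
  classical
  have hn0 : 0 < n := by omega
  set i0 : Fin n := ⟨0, hn0⟩ with hi0
  refine ⟨{v | v ∈ V n k 1 ∧ v i0 = 1}, fun v hv => hv.1, ?_, ?_⟩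
  · -- intersecting
    rintro v ⟨hvV, hv0⟩ w ⟨hwV, hw0⟩
    obtain ⟨xv, hxv⟩ := Finset.card_eq_one.mp hvV.2.2
    obtain ⟨xw, hxw⟩ := Finset.card_eq_one.mp hwV.2.2
    have hvm : ∀ i, v i = -1 ↔ i = xv := by
      intro i
      constructor
      · intro h
        have : i ∈ univ.filter fun j => v j = -1 := mem_filter.mpr ⟨mem_univ i, h⟩
        rwa [hxv, mem_singleton] at this
      · intro h
        have : xv ∈ univ.filter fun j => v j = -1 := by
          rw [hxv]; exact mem_singleton_self xv
        rw [h]; exact (mem_filter.mp this).2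
    have hwm : ∀ i, w i = -1 ↔ i = xw := by
      intro i
      constructor
      · intro h
        have : i ∈ univ.filter fun j => w j = -1 := mem_filter.mpr ⟨mem_univ i, h⟩
        rwa [hxw, mem_singleton] at this
      · intro h
        have : xw ∈ univ.filter fun j => w j = -1 := by
          rw [hxw]; exact mem_singleton_self xw
        rw [h]; exact (mem_filter.mp this).2
    have hpoint : ∀ i : Fin n, v i * w i ≥
        (if i = xv then (-1 : ℤ) else 0) + (if i = xw then (-1 : ℤ) else 0) := by
      intro i
      have hvi := hvV.1 i
      have hwi := hwV.1 i
      by_cases h1 : i = xv <;> by_cases h2 : i = xw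
      · rw [if_pos h1, if_pos h2, (hvm i).mpr h1, (hwm i).mpr h2]; norm_num
      · rw [if_pos h1, if_neg h2, (hvm i).mpr h1]
        rcases hwi with h | h | h
        · rw [h]; norm_num
        · rw [h]; norm_num
        · exact absurd ((hwm i).mp h) h2
      · rw [if_neg h1, if_pos h2, (hwm i).mpr h2]
        rcases hvi with h | h | h
        · rw [h]; norm_num
        · rw [h]; norm_num
        · exact absurd ((hvm i).mp h) h1
      · rw [if_neg h1, if_neg h2]
        rcases hvi with h | h | h <;> rcases hwi with g | g | g <;>
          first
          | (exact absurd ((hvm i).mp (by assumption)) h1)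
          | (exact absurd ((hwm i).mp (by assumption)) h2)
          | (rw [h, g]; norm_num)
    have hsplit : dot v w = v i0 * w i0 + ∑ i ∈ univ.erase i0, v i * w i :=
      (Finset.add_sum_erase univ (fun i => v i * w i) (mem_univ i0)).symm
    have hbound : ∑ i ∈ univ.erase i0, v i * w i ≥ -2 := by
      calc ∑ i ∈ univ.erase i0, v i * w i
          ≥ ∑ i ∈ univ.erase i0, ((if i = xv then (-1 : ℤ) else 0)
              + (if i = xw then (-1 : ℤ) else 0)) :=
            Finset.sum_le_sum (fun i _ => hpoint i)
        _ = (∑ i ∈ univ.erase i0, if i = xv then (-1 : ℤ) else 0)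
              + (∑ i ∈ univ.erase i0, if i = xw then (-1 : ℤ) else 0) :=
            Finset.sum_add_distrib
        _ ≥ -2 := by
            rw [Finset.sum_ite_eq' (univ.erase i0) xv (fun _ => (-1 : ℤ)),
              Finset.sum_ite_eq' (univ.erase i0) xw (fun _ => (-1 : ℤ))]
            split_ifs <;> norm_num
    intro hdot
    rw [hsplit, hv0, hw0, one_mul] at hdot
    omega
  · -- cardinality
    have hVfin : (V n k 1).Finite := by
      have hfin : ({0, 1, -1} : Set ℤ).Finite :=
        ((Set.finite_singleton (-1 : ℤ)).insert 1).insert 0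
      apply Set.Finite.subset (Set.Finite.pi (fun _ : Fin n => hfin))
      intro v hv
      rw [Set.mem_pi]
      intro i _
      rcases hv.1 i with h | h | h <;> simp [h]
    have hFfin : ({v | v ∈ V n k 1 ∧ v i0 = 1} : Set (Fin n → ℤ)).Finite :=
      hVfin.subset (fun v hv => hv.1)
    rw [Set.ncard_eq_toFinset_card _ hFfin]
    set P := (univ.erase i0).powersetCard (k - 1) with hP
    set Q := P.sigma (fun A => univ \ insert i0 A) with hQ
    set vf : Finset (Fin n) → Fin n → (Fin n → ℤ) :=
      fun A x => fun i => if i ∈ insert i0 A then 1 else if i = x then -1 else 0 with hvf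
    -- characterizations
    have hchar1 : ∀ (A : Finset (Fin n)) (x : Fin n), x ∉ insert i0 A →
        (univ.filter fun i => vf A x i = 1) = insert i0 A := by
      intro A x hx
      ext i
      simp only [mem_filter, mem_univ, true_and, hvf]
      split_ifs with h1 h2
      · exact iff_of_true rfl h1
      · exact iff_of_false (by norm_num) h1
      · exact iff_of_false (by norm_num) h1
    have hcharm : ∀ (A : Finset (Fin n)) (x : Fin n), x ∉ insert i0 A →
        (univ.filter fun i => vf A x i = -1) = {x} := by
      intro A x hx
      ext i
      simp only [mem_filter, mem_univ, true_and, hvf, mem_singleton]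
      split_ifs with h1 h2
      · exact iff_of_false (by norm_num) (fun hix => hx (hix ▸ h1))
      · exact iff_of_true rfl h2
      · exact iff_of_false (by norm_num) h2
    have hQmem : ∀ p ∈ Q, (p : (_ : Finset (Fin n)) × Fin n).2 ∉ insert i0 p.1 ∧
        p.1 ⊆ univ.erase i0 ∧ p.1.card = k - 1 := by
      rintro ⟨A, x⟩ hp
      rw [hQ, Finset.mem_sigma] at hp
      obtain ⟨hA, hx⟩ := hp
      rw [hP, Finset.mem_powersetCard] at hA
      rw [Finset.mem_sdiff] at hx
      exact ⟨hx.2, hA.1, hA.2⟩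
    have hinsert_card : ∀ (A : Finset (Fin n)), A ⊆ univ.erase i0 → A.card = k - 1 →
        (insert i0 A).card = k := by
      intro A hA hcard
      rw [Finset.card_insert_of_notMem (fun h => (Finset.mem_erase.mp (hA h)).1 rfl), hcard]
      omega
    have hcard : Q.card = hFfin.toFinset.card := by
      apply Finset.card_bij (fun p _ => vf p.1 p.2)
      · -- maps into target
        rintro ⟨A, x⟩ hp
        obtain ⟨hx, hA, hAcard⟩ := hQmem _ hp
        rw [Set.Finite.mem_toFinset]
        refine ⟨⟨?_, ?_, ?_⟩, ?_⟩
        · intro i; simp only [hvf]; split_ifs <;> simp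
        · rw [hchar1 A x hx, hinsert_card A hA hAcard]
        · rw [hcharm A x hx, card_singleton]
        · simp only [hvf]; rw [if_pos (mem_insert_self i0 A)]
      · -- injective
        rintro ⟨A1, x1⟩ hp1 ⟨A2, x2⟩ hp2 heq
        obtain ⟨hx1, hA1, _⟩ := hQmem _ hp1
        obtain ⟨hx2, hA2, _⟩ := hQmem _ hp2
        have e1 : insert i0 A1 = insert i0 A2 := by
          rw [← hchar1 A1 x1 hx1, ← hchar1 A2 x2 hx2, heq]
        have ex : x1 = x2 := by
          have hsing : ({x1} : Finset (Fin n)) = {x2} := by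
            rw [← hcharm A1 x1 hx1, ← hcharm A2 x2 hx2, heq]
          exact Finset.singleton_injective hsing
        have eA : A1 = A2 := by
          have h1 : i0 ∉ A1 := fun h => (Finset.mem_erase.mp (hA1 h)).1 rfl
          have h2 : i0 ∉ A2 := fun h => (Finset.mem_erase.mp (hA2 h)).1 rfl
          rw [← Finset.erase_insert h1, ← Finset.erase_insert h2, e1]
        subst eA; subst ex; rfl
      · -- surjective
        intro v hv
        rw [Set.Finite.mem_toFinset] at hv
        obtain ⟨⟨hvals, hc1, hcm⟩, hv0⟩ := hv
        have hi0mem : i0 ∈ univ.filter fun i => v i = 1 := by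
          rw [mem_filter]; exact ⟨mem_univ _, hv0⟩
        obtain ⟨x, hx⟩ := Finset.card_eq_one.mp hcm
        set A := (univ.filter fun i => v i = 1).erase i0 with hA
        have hins : insert i0 A = univ.filter fun i => v i = 1 :=
          Finset.insert_erase hi0mem
        have hxmem : v x = -1 := by
          have : x ∈ univ.filter fun i => v i = -1 := by rw [hx]; exact mem_singleton_self x
          exact (mem_filter.mp this).2
        have hxnot : x ∉ insert i0 A := by
          rw [hins, mem_filter]
          rintro ⟨-, h⟩
          rw [h] at hxmem; norm_num at hxmem
        refine ⟨⟨A, x⟩, ?_, ?_⟩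
        · rw [hQ, Finset.mem_sigma]
          constructor
          · rw [hP, Finset.mem_powersetCard]
            constructor
            · intro i hi
              rw [Finset.mem_erase] at hi ⊢
              exact ⟨hi.1, mem_univ i⟩
            · rw [hA, Finset.card_erase_of_mem hi0mem, hc1]
          · rw [Finset.mem_sdiff]
            exact ⟨mem_univ x, hxnot⟩
        · funext i
          simp only [hvf]
          by_cases h1 : i ∈ insert i0 A
          · rw [if_pos h1]
            rw [hins, mem_filter] at h1
            exact h1.2.symm
          · rw [if_neg h1]
            by_cases h2 : i = x
            · rw [if_pos h2, h2, hxmem]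
            · rw [if_neg h2]
              have hne1 : v i ≠ 1 := by
                rw [hins] at h1; intro h; exact h1 (mem_filter.mpr ⟨mem_univ i, h⟩)
              have hnem : v i ≠ -1 := by
                intro h
                have : i ∈ univ.filter fun j => v j = -1 := mem_filter.mpr ⟨mem_univ i, h⟩
                rw [hx, mem_singleton] at this
                exact h2 this
              rcases hvals i with h | h | h
              · exact h.symm
              · exact absurd h hne1
              · exact absurd h hnem
    rw [← hcard, hQ, Finset.card_sigma]
    have hcount : ∀ A ∈ P, (univ \ insert i0 A).card = n - k := by
      intro A hA
      rw [hP, Finset.mem_powersetCard] at hA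
      rw [Finset.card_sdiff_of_subset (Finset.subset_univ _), card_univ, Fintype.card_fin,
        hinsert_card A hA.1 hA.2]
    rw [Finset.sum_congr rfl hcount, Finset.sum_const, smul_eq_mul]
    have hPcard : P.card = (n - 1).choose (k - 1) := by
      rw [hP, Finset.card_powersetCard, Finset.card_erase_of_mem (mem_univ i0), card_univ,
        Fintype.card_fin]
    rw [hPcard]
    -- (n-1).choose (k-1) * (n-k) = k * (n-1).choose k
    have h := Nat.choose_succ_right_eq (n - 1) (k - 1)
    rw [show k - 1 + 1 = k by omega, show n - 1 - (k - 1) = n - k by omega] at h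
    rw [← h]; ring


end Stmt17Aux

theorem stmt_17 (n k : ℕ) (hk : 1 ≤ k) (hn : 2 * k ≤ n) (hn' : n + 1 ≤ 3 * k) :
    (∀ F : Set (Fin n → ℤ), F ⊆ V n k 1 →
        (∀ v ∈ F, ∀ w ∈ F, dot v w ≠ -2) →
        F.ncard ≤ k * (n - 1).choose k) ∧
    (∃ F : Set (Fin n → ℤ), F ⊆ V n k 1 ∧
        (∀ v ∈ F, ∀ w ∈ F, dot v w ≠ -2) ∧
        F.ncard = k * (n - 1).choose k) :=
  ⟨fun F hFV hint => Stmt17Aux.upper_bound n k hk hn hn' F hFV hint,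
   Stmt17Aux.lower_bound n k hk hn⟩
end
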